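/- arXiv:1509.09286 — 5 statements merged into one kernel-verified Lean document; each statement's English description precedes it below -/
import Mathlib

section
/- With aᵢ² = i^{−(2α+1)} and σᵢ² = i^{2β} for α > 0, β > −1/2, the quantity d_o(n) = max{k ∈ ℕ : Σ_{i=1}^{k} i^β (k^{2α+β+1} − i^{2α+β+1}) ≤ n} satisfies d_o(n) ∼ B_o · n^{1/(2α+2β+2)} as n → ∞, where B_o = (2(β+1)(α+β+1)/(2α+β+1))^{1/(2α+2β+2)}. -/
open Filter Finset


lemma shift_sum (f : ℝ → ℝ) (k : ℕ) :
    ∑ i ∈ Finset.range k, f (i + 1 : ℕ) = ∑ i ∈ Finset.Icc 1 k, f i := by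
  rw [← Finset.Ico_add_one_right_eq_Icc, Finset.sum_Ico_eq_sum_range]
  simp [add_comm]

lemma sum_rpow_lower (r : ℝ) (hr : -1 < r) (k : ℕ) :
    ((k : ℝ) ^ (r+1) - 1) / (r+1) - 1 ≤ ∑ i ∈ Finset.Icc 1 k, (i : ℝ) ^ r := by
  have hr1 : (0:ℝ) < r + 1 := by linarith
  rcases le_or_gt 0 r with h0 | h0
  · have hmono : MonotoneOn (fun x : ℝ => x ^ r) (Set.Icc ((0:ℕ):ℝ) ((k:ℕ):ℝ)) := by
      intro x hx y _ hxy
      exact Real.rpow_le_rpow (by simpa using hx.1) hxy h0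
    have h := hmono.integral_le_sum_Ico (Nat.zero_le k)
    rw [integral_rpow (Or.inl hr)] at h
    have hcast : ∑ i ∈ Finset.Ico 0 k, (((i:ℕ) + 1 : ℕ):ℝ) ^ r = ∑ i ∈ Finset.Icc 1 k, (i:ℝ) ^ r := by
      rw [Nat.Ico_zero_eq_range, shift_sum (fun x => x ^ r) k]
    rw [hcast] at h
    have h0k : ((0:ℕ):ℝ) ^ (r+1) = 0 := by
      simp [Real.zero_rpow (ne_of_gt hr1)]
    rw [h0k] at h
    have h2 : ((k : ℝ) ^ (r+1) - 1) / (r+1) ≤ ((k:ℝ) ^ (r+1) - 0) / (r+1) := by gcongr; norm_num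
    linarith
  · have hanti : AntitoneOn (fun x : ℝ => x ^ r) (Set.Icc ((1:ℕ):ℝ) ((k+1:ℕ):ℝ)) := by
      intro x hx y hy hxy
      exact Real.rpow_le_rpow_of_nonpos (lt_of_lt_of_le one_pos (by simpa using hx.1)) hxy h0.le
    have h := hanti.integral_le_sum_Ico (by omega : 1 ≤ k + 1)
    rw [integral_rpow (Or.inl hr)] at h
    rw [Finset.Ico_add_one_right_eq_Icc] at h
    have h1 : (((1:ℕ)):ℝ) ^ (r+1) = 1 := by simp
    rw [h1] at h
    push_cast at h
    have hmono2 : (k:ℝ) ^ (r+1) ≤ ((k:ℝ)+1) ^ (r+1) :=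
      Real.rpow_le_rpow (by positivity) (by linarith) hr1.le
    have h2 : ((k : ℝ) ^ (r+1) - 1) / (r+1) ≤ (((k:ℝ)+1) ^ (r+1) - 1) / (r+1) := by gcongr
    linarith

lemma sum_rpow_upper (r : ℝ) (hr : -1 < r) (k : ℕ) (hk : 1 ≤ k) :
    ∑ i ∈ Finset.Icc 1 k, (i : ℝ) ^ r ≤ ((k:ℝ)+1) ^ (r+1) / (r+1) + 1 := by
  have hr1 : (0:ℝ) < r + 1 := by linarith
  rcases le_or_gt 0 r with h0 | h0
  · have hmono : MonotoneOn (fun x : ℝ => x ^ r) (Set.Icc ((1:ℕ):ℝ) ((k+1:ℕ):ℝ)) := by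
      intro x hx y _ hxy
      exact Real.rpow_le_rpow (le_trans zero_le_one (by simpa using hx.1)) hxy h0
    have h := hmono.sum_le_integral_Ico (by omega : 1 ≤ k + 1)
    rw [integral_rpow (Or.inl hr), Finset.Ico_add_one_right_eq_Icc] at h
    simp only [Nat.cast_one, Real.one_rpow] at h
    push_cast at h
    have h2 : (((k:ℝ)+1) ^ (r+1) - 1) / (r+1) ≤ ((k:ℝ)+1) ^ (r+1) / (r+1) := by gcongr; norm_num
    linarith
  · -- antitone: sum over Icc 1 k = 1 + ∑_{Ico 1 k} f(i+1) ≤ 1 + ∫_1^k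
    have hanti : AntitoneOn (fun x : ℝ => x ^ r) (Set.Icc ((1:ℕ):ℝ) ((k:ℕ):ℝ)) := by
      intro x hx y hy hxy
      exact Real.rpow_le_rpow_of_nonpos (lt_of_lt_of_le one_pos (by simpa using hx.1)) hxy h0.le
    have h := hanti.sum_le_integral_Ico hk
    rw [integral_rpow (Or.inl hr)] at h
    have hsplit : ∑ i ∈ Finset.Icc 1 k, (i:ℝ) ^ r
        = 1 + ∑ i ∈ Finset.Ico 1 k, (((i:ℕ)+1:ℕ):ℝ) ^ r := by
      rw [← shift_sum (fun x => x ^ r) k]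
      obtain ⟨m, rfl⟩ := Nat.exists_eq_add_of_le' hk
      rw [Finset.sum_range_succ' (fun i => (((i:ℕ)+1:ℕ):ℝ) ^ r)]
      rw [Finset.sum_Ico_eq_sum_range]
      simp only [Nat.add_sub_cancel, Nat.zero_add, Nat.cast_one, Real.one_rpow]
      rw [add_comm]
      congr 1
      exact Finset.sum_congr rfl fun i _ => by rw [Nat.add_comm 1 i]
    have h1 : (((1:ℕ)):ℝ) ^ (r+1) = 1 := by simp
    rw [h1] at h
    push_cast at h hsplit
    rw [hsplit]
    have hmono2 : (k:ℝ) ^ (r+1) ≤ ((k:ℝ)+1) ^ (r+1) :=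
      Real.rpow_le_rpow (by positivity) (by linarith) hr1.le
    have h2 : ((k : ℝ) ^ (r+1) - 1) / (r+1) ≤ ((k:ℝ)+1) ^ (r+1) / (r+1) := by gcongr; linarith
    linarith

lemma tendsto_sum_rpow (r : ℝ) (hr : -1 < r) :
    Tendsto (fun k : ℕ => (∑ i ∈ Finset.Icc 1 k, (i:ℝ) ^ r) / (k:ℝ) ^ (r+1))
      atTop (nhds (1/(r+1))) := by
  have hr1 : (0:ℝ) < r + 1 := by linarith
  have hcast : Tendsto (fun k : ℕ => (k:ℝ)) atTop atTop := tendsto_natCast_atTop_atTop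
  have he : Tendsto (fun k : ℕ => (k:ℝ) ^ (-(r+1))) atTop (nhds 0) :=
    (tendsto_rpow_neg_atTop hr1).comp hcast
  have hone : Tendsto (fun k : ℕ => (1 + 1/(k:ℝ)) ^ (r+1)) atTop (nhds 1) := by
    have h1 : Tendsto (fun k : ℕ => 1 + 1/(k:ℝ)) atTop (nhds 1) := by
      have := (tendsto_const_nhds (x := (1:ℝ)) (f := atTop (α := ℕ))).add
        (tendsto_one_div_atTop_nhds_zero_nat)
      simpa using this
    have := h1.rpow_const (p := r+1) (Or.inl one_ne_zero)
    simpa using this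
  -- lower bound tendsto
  have hlow : Tendsto (fun k : ℕ => (((k:ℝ) ^ (r+1) - 1)/(r+1) - 1) / (k:ℝ) ^ (r+1))
      atTop (nhds (1/(r+1))) := by
    have heq : (fun k : ℕ => (((k:ℝ) ^ (r+1) - 1)/(r+1) - 1) / (k:ℝ) ^ (r+1))
        =ᶠ[atTop] (fun k : ℕ => 1/(r+1) - ((k:ℝ) ^ (-(r+1)))/(r+1) - (k:ℝ) ^ (-(r+1))) := by
      filter_upwards [eventually_ge_atTop 1] with k hk
      have hkpos : (0:ℝ) < (k:ℝ) := by exact_mod_cast hk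
      have hx : (0:ℝ) < (k:ℝ) ^ (r+1) := Real.rpow_pos_of_pos hkpos _
      rw [Real.rpow_neg hkpos.le]
      field_simp
    rw [show (1/(r+1) : ℝ) = 1/(r+1) - 0/(r+1) - 0 by ring]
    exact Tendsto.congr' heq.symm ((tendsto_const_nhds.sub (he.div_const _)).sub he)
  -- upper bound tendsto
  have hub : Tendsto (fun k : ℕ => (((k:ℝ)+1) ^ (r+1)/(r+1) + 1) / (k:ℝ) ^ (r+1))
      atTop (nhds (1/(r+1))) := by
    have heq : (fun k : ℕ => (((k:ℝ)+1) ^ (r+1)/(r+1) + 1) / (k:ℝ) ^ (r+1))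
        =ᶠ[atTop] (fun k : ℕ => ((1 + 1/(k:ℝ)) ^ (r+1))/(r+1) + (k:ℝ) ^ (-(r+1))) := by
      filter_upwards [eventually_ge_atTop 1] with k hk
      have hkpos : (0:ℝ) < (k:ℝ) := by exact_mod_cast hk
      have hx : (0:ℝ) < (k:ℝ) ^ (r+1) := Real.rpow_pos_of_pos hkpos _
      have h1 : (1 + 1/(k:ℝ)) = ((k:ℝ)+1)/(k:ℝ) := by field_simp
      rw [h1, Real.div_rpow (by positivity) hkpos.le, Real.rpow_neg hkpos.le]
      field_simp
    rw [show (1/(r+1) : ℝ) = 1/(r+1) + 0 by ring]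
    have : Tendsto (fun k : ℕ => ((1 + 1/(k:ℝ)) ^ (r+1))/(r+1) + (k:ℝ) ^ (-(r+1)))
        atTop (nhds (1/(r+1) + 0)) := by
      have := (hone.div_const (r+1)).add he
      simpa using this
    exact Tendsto.congr' heq.symm this
  refine tendsto_of_tendsto_of_tendsto_of_le_of_le' hlow hub ?_ ?_
  · filter_upwards [eventually_ge_atTop 1] with k hk
    have hkpos : (0:ℝ) < (k:ℝ) := by exact_mod_cast hk
    have hx : (0:ℝ) < (k:ℝ) ^ (r+1) := Real.rpow_pos_of_pos hkpos _
    gcongr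
    exact sum_rpow_lower r hr k
  · filter_upwards [eventually_ge_atTop 1] with k hk
    have hkpos : (0:ℝ) < (k:ℝ) := by exact_mod_cast hk
    have hx : (0:ℝ) < (k:ℝ) ^ (r+1) := Real.rpow_pos_of_pos hkpos _
    gcongr
    exact sum_rpow_upper r hr k hk

lemma ratio_rpow (q : ℝ) : Tendsto (fun k : ℕ => ((k:ℝ)+1) ^ q / (k:ℝ) ^ q) atTop (nhds 1) := by
  have h1 : Tendsto (fun k : ℕ => 1 + 1/(k:ℝ)) atTop (nhds 1) := by
    have := (tendsto_const_nhds (x := (1:ℝ)) (f := atTop (α := ℕ))).add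
      (tendsto_one_div_atTop_nhds_zero_nat)
    simpa using this
  have h2 := h1.rpow_const (p := q) (Or.inl one_ne_zero)
  rw [Real.one_rpow] at h2
  refine h2.congr' ?_
  filter_upwards [eventually_ge_atTop 1] with k hk
  have hkpos : (0:ℝ) < (k:ℝ) := by exact_mod_cast hk
  rw [show (1 + 1/(k:ℝ)) = ((k:ℝ)+1)/(k:ℝ) by field_simp]
  rw [Real.div_rpow (by positivity) hkpos.le]

/-- Number of effectively measured coordinates for the Sobolev hyperrectangle:
d_o(n) = max{k : Σ_{i=1}^k i^β (k^{2α+β+1} − i^{2α+β+1}) ≤ n} satisfies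
d_o(n) ∼ B_o n^{1/(2α+2β+2)} with B_o = (2(β+1)(α+β+1)/(2α+β+1))^{1/(2α+2β+2)}. -/
theorem stmt8 (α β : ℝ) (hα : 0 < α) (hβ : -(1/2 : ℝ) < β)
    (dO : ℝ → ℕ)
    (hdO : ∀ n : ℝ, dO n = sSup {k : ℕ |
      ∑ i ∈ Finset.Icc 1 k, (i : ℝ) ^ β *
        ((k : ℝ) ^ (2*α + β + 1) - (i : ℝ) ^ (2*α + β + 1)) ≤ n}) :
    Tendsto (fun n : ℝ => (dO n : ℝ) /
        ((2*(β+1)*(α+β+1)/(2*α+β+1)) ^ (1/(2*α+2*β+2)) * n ^ (1/(2*α+2*β+2))))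
      atTop (nhds 1) := by
  set p : ℝ := 2*α + β + 1 with hp
  set q : ℝ := 2*α + 2*β + 2 with hq
  have hβ1 : (0:ℝ) < β + 1 := by linarith
  have hppos : 0 < p := by simp [hp]; linarith
  have hqpos : 0 < q := by simp [hq]; linarith
  have hq_eq : q = p + β + 1 := by simp [hp, hq]; ring
  set C : ℝ := 1/(β+1) - 1/q with hCdef
  have hβq : β + 1 < q := by simp [hq]; linarith
  have hC : 0 < C := by
    rw [hCdef]
    have := one_div_lt_one_div_of_lt hβ1 hβq
    linarith
  set S : ℕ → ℝ := fun k => ∑ i ∈ Finset.Icc 1 k, (i:ℝ) ^ β * ((k:ℝ) ^ p - (i:ℝ) ^ p) with hSdef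
  -- Step A
  have hS : Tendsto (fun k : ℕ => S k / (k:ℝ) ^ q) atTop (nhds C) := by
    have hA := tendsto_sum_rpow β (by linarith)
    have hB := tendsto_sum_rpow (p + β) (by linarith)
    have := hA.sub hB
    rw [hCdef]
    have hCval : 1/(β+1) - 1/(p+β+1) = C := by rw [hCdef, hq_eq]
    rw [show (1/(β+1) : ℝ) - 1/q = 1/(β+1) - 1/(p+β+1) by rw [hq_eq]]
    refine this.congr' ?_
    filter_upwards [eventually_ge_atTop 1] with k hk
    have hkpos : (0:ℝ) < (k:ℝ) := by exact_mod_cast hk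
    have hsplit : S k = (k:ℝ)^p * (∑ i ∈ Finset.Icc 1 k, (i:ℝ) ^ β)
        - ∑ i ∈ Finset.Icc 1 k, (i:ℝ) ^ (p+β) := by
      rw [hSdef, Finset.mul_sum, ← Finset.sum_sub_distrib]
      refine Finset.sum_congr rfl fun i hi => ?_
      have hipos : (0:ℝ) < (i:ℝ) := by
        exact_mod_cast (Finset.mem_Icc.mp hi).1
      rw [Real.rpow_add hipos p β]
      ring
    have hkq : (k:ℝ)^q = (k:ℝ)^p * (k:ℝ)^(β+1) := by
      rw [← Real.rpow_add hkpos, hq_eq]; ring_nf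
    have hkp : (k:ℝ)^p ≠ 0 := ne_of_gt (Real.rpow_pos_of_pos hkpos _)
    have hkb : (k:ℝ)^(β+1) ≠ 0 := ne_of_gt (Real.rpow_pos_of_pos hkpos _)
    have hkpb : (k:ℝ)^(p+β+1) = (k:ℝ)^q := by rw [hq_eq]
    rw [hkpb]
    rw [hsplit, hkq, sub_div, mul_div_mul_left _ _ hkp]
  -- Step C: S tends to infinity
  have hkqtop : Tendsto (fun k : ℕ => (k:ℝ) ^ q) atTop atTop :=
    (tendsto_rpow_atTop hqpos).comp tendsto_natCast_atTop_atTop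
  have hStop : Tendsto S atTop atTop := by
    have := hS.pos_mul_atTop hC hkqtop
    refine this.congr' ?_
    filter_upwards [eventually_ge_atTop 1] with k hk
    have hkpos : (0:ℝ) < (k:ℝ) := by exact_mod_cast hk
    exact div_mul_cancel₀ _ (ne_of_gt (Real.rpow_pos_of_pos hkpos _))
  -- Step D: properties of dO
  have hset : ∀ n : ℝ, {k : ℕ |
      ∑ i ∈ Finset.Icc 1 k, (i : ℝ) ^ β *
        ((k : ℝ) ^ (2*α + β + 1) - (i : ℝ) ^ (2*α + β + 1)) ≤ n} = {k : ℕ | S k ≤ n} := by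
    intro n; rfl
  have hdO' : ∀ n : ℝ, dO n = sSup {k : ℕ | S k ≤ n} := by
    intro n; rw [hdO n, hset n]
  have hbdd : ∀ n : ℝ, BddAbove {k : ℕ | S k ≤ n} := by
    intro n
    obtain ⟨K, hK⟩ := (tendsto_atTop.mp hStop (n + 1)).exists_forall_of_atTop
    refine ⟨K, fun k hk => ?_⟩
    by_contra hle
    push_neg at hle
    have := hK k hle.le
    have : S k ≤ n := hk
    linarith [hK k hle.le]
  have h0mem : ∀ n : ℝ, 0 ≤ n → 0 ∈ {k : ℕ | S k ≤ n} := by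
    intro n hn
    simp only [Set.mem_setOf_eq, hSdef]
    simp [hn]
  have hmem : ∀ n : ℝ, 0 ≤ n → S (dO n) ≤ n := by
    intro n hn
    have := Nat.sSup_mem ⟨0, h0mem n hn⟩ (hbdd n)
    rw [← hdO' n] at this
    exact this
  have hnot : ∀ n : ℝ, 0 ≤ n → n < S (dO n + 1) := by
    intro n hn
    by_contra hle
    push_neg at hle
    have h1 : dO n + 1 ∈ {k : ℕ | S k ≤ n} := hle
    have := le_csSup (hbdd n) h1
    rw [← hdO' n] at this
    omega
  have htop : Tendsto (fun n : ℝ => dO n) atTop atTop := by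
    rw [tendsto_atTop]
    intro K
    filter_upwards [eventually_ge_atTop (max (S K) 0)] with n hn
    have hK : K ∈ {k : ℕ | S k ≤ n} := le_trans (le_max_left _ _) hn
    have := le_csSup (hbdd n) hK
    rw [← hdO' n] at this
    exact this
  -- Step E
  have htop1 : Tendsto (fun n : ℝ => dO n + 1) atTop atTop :=
    tendsto_atTop_mono (fun n => Nat.le_succ _) htop
  have hg1 : Tendsto (fun n : ℝ => S (dO n) / ((dO n : ℕ):ℝ)^q) atTop (nhds C) := hS.comp htop
  have hg2 : Tendsto (fun n : ℝ => S (dO n + 1) / (((dO n + 1 : ℕ)):ℝ)^q) atTop (nhds C) :=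
    hS.comp htop1
  have hrat : Tendsto (fun n : ℝ => ((dO n:ℝ)+1)^q / (dO n:ℝ)^q) atTop (nhds 1) :=
    (ratio_rpow q).comp htop
  have hev1 : ∀ᶠ n : ℝ in atTop, 1 ≤ dO n := tendsto_atTop.mp htop 1
  -- Step F: squeeze for n / (dO n)^q → C
  have hh : Tendsto (fun n : ℝ => n / (dO n : ℝ)^q) atTop (nhds C) := by
    have hu : Tendsto (fun n : ℝ => S (dO n + 1) / (((dO n + 1 : ℕ)):ℝ)^q
        * (((dO n:ℝ)+1)^q / (dO n:ℝ)^q)) atTop (nhds C) := by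
      have := hg2.mul hrat
      rwa [mul_one] at this
    refine tendsto_of_tendsto_of_tendsto_of_le_of_le' hg1 hu ?_ ?_
    · filter_upwards [hev1, eventually_ge_atTop (0:ℝ)] with n hn1 hn0
      have hx : (0:ℝ) < (dO n : ℝ)^q :=
        Real.rpow_pos_of_pos (by exact_mod_cast hn1) _
      exact (div_le_div_iff_of_pos_right hx).mpr (hmem n hn0)
    · filter_upwards [hev1, eventually_ge_atTop (0:ℝ)] with n hn1 hn0
      have hxpos : (0:ℝ) < (dO n : ℝ) := by exact_mod_cast hn1
      have hx : (0:ℝ) < (dO n : ℝ)^q := Real.rpow_pos_of_pos hxpos _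
      have hy : (0:ℝ) < ((dO n : ℝ)+1)^q := Real.rpow_pos_of_pos (by linarith) _
      have hcast : (((dO n + 1 : ℕ)):ℝ) = (dO n:ℝ)+1 := by push_cast; ring
      have hueq : S (dO n + 1) / (((dO n + 1 : ℕ)):ℝ)^q * (((dO n:ℝ)+1)^q / (dO n:ℝ)^q)
          = S (dO n + 1) / (dO n:ℝ)^q := by
        rw [hcast]
        field_simp
      rw [hueq]
      exact (div_le_div_iff_of_pos_right hx).mpr (hnot n hn0).le
  -- Step G: conclusion
  have hCq : (2*(β+1)*(α+β+1)/(2*α+β+1)) = 1/C := by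
    have hCval : C = (2*α+β+1)/(2*(β+1)*(α+β+1)) := by
      rw [hCdef, hq]
      have h1 : (2:ℝ)*(β+1)*(α+β+1) ≠ 0 :=
        ne_of_gt (mul_pos (by linarith) (by linarith))
      have h2 : (2*α + 2*β + 2 : ℝ) ≠ 0 := by linarith
      have h3 : (α + β + 1 : ℝ) ≠ 0 := by linarith
      have h4 : (β + 1 : ℝ) ≠ 0 := by linarith
      field_simp
      ring
    rw [hCval, one_div_div]
  have hBopos : (0:ℝ) < (1/C) ^ (1/q) := Real.rpow_pos_of_pos (one_div_pos.mpr hC) _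
  have hgoal : Tendsto (fun n : ℝ => (1/(n / (dO n:ℝ)^q))^(1/q) / ((1/C) ^ (1/q)))
      atTop (nhds 1) := by
    have h1 : Tendsto (fun n : ℝ => 1/(n / (dO n:ℝ)^q)) atTop (nhds (1/C)) :=
      tendsto_const_nhds.div hh (ne_of_gt hC)
    have h2 := h1.rpow_const (p := 1/q) (Or.inl (ne_of_gt (one_div_pos.mpr hC)))
    have h3 := h2.div_const ((1/C) ^ (1/q))
    rwa [div_self (ne_of_gt hBopos)] at h3
  rw [hCq]
  refine hgoal.congr' ?_
  filter_upwards [hev1, eventually_ge_atTop (1:ℝ)] with n hn1 hn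
  have hxpos : (0:ℝ) < (dO n : ℝ) := by exact_mod_cast hn1
  have hnpos : (0:ℝ) < n := by linarith
  have hx : (0:ℝ) < (dO n : ℝ)^q := Real.rpow_pos_of_pos hxpos _
  have hnq : (0:ℝ) < n^(1/q) := Real.rpow_pos_of_pos hnpos _
  rw [one_div_div, Real.div_rpow hx.le hnpos.le,
    ← Real.rpow_mul hxpos.le, mul_one_div, div_self (ne_of_gt hqpos), Real.rpow_one]
  rw [div_div, mul_comm]
end

section
/- Let α > 0 and β > −1/2. Then as n → ∞, Σ_{i=1}^{∞} i^{2β}/(n + i^{2α+2β+1}) ∼ B̄_H · n^{−2α/(2α+2β+1)}, where B̄_H = B(2α/(2α+2β+1), (2β+1)/(2α+2β+1))/(2α+2β+1) and B is the Euler beta function. -/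
open Filter

/-- The Euler beta function B(x,y) = ∫₀¹ t^{x−1}(1−t)^{y−1} dt. -/
noncomputable def eulerBeta (x y : ℝ) : ℝ :=
  ∫ t in (0:ℝ)..1, t ^ (x - 1) * (1 - t) ^ (y - 1)

open MeasureTheory Set Real Topology

namespace Stmt10Aux

noncomputable def f (s p x : ℝ) : ℝ := x ^ s / (1 + x ^ p)

variable {s p : ℝ}

lemma denom_pos (hp : 0 < p) {x : ℝ} (hx : 0 < x) : 0 < 1 + x ^ p := by
  have := rpow_pos_of_pos hx p
  linarith

lemma f_contOn (hp : 0 < p) : ContinuousOn (f s p) (Ioi 0) := by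
  apply ContinuousOn.div
  · exact continuousOn_id.rpow_const fun x hx => Or.inl (ne_of_gt hx)
  · exact continuousOn_const.add (continuousOn_id.rpow_const fun x hx => Or.inl (ne_of_gt hx))
  · exact fun x hx => (denom_pos hp hx).ne'

/-- the dominating function -/
noncomputable def G (s p x : ℝ) : ℝ := (x ^ s + (x + 1) ^ s) / (1 + x ^ p)

lemma G_contOn (hp : 0 < p) : ContinuousOn (G s p) (Ioi 0) := by
  apply ContinuousOn.div
  · apply ContinuousOn.add
    · exact continuousOn_id.rpow_const fun x hx => Or.inl (ne_of_gt hx)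
    · refine (continuousOn_id.add continuousOn_const).rpow_const fun x hx => Or.inl ?_
      have : (0:ℝ) < x := hx
      show x + 1 ≠ 0
      positivity
  · exact continuousOn_const.add (continuousOn_id.rpow_const fun x hx => Or.inl (ne_of_gt hx))
  · exact fun x hx => (denom_pos hp hx).ne'

lemma G_integrable (hs : -1 < s) (hsp : s + 1 < p) : IntegrableOn (G s p) (Ioi 0) := by
  have hp : 0 < p := by linarith
  rw [← Ioc_union_Ioi_eq_Ioi (zero_le_one)]
  apply IntegrableOn.union
  · -- on Ioc 0 1, bound by x^s + max (2^s) 1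
    have hbint : IntegrableOn (fun x : ℝ => x ^ s + max (2 ^ s) 1) (Ioc 0 1) := by
      apply Integrable.add
      · have h := intervalIntegral.intervalIntegrable_rpow' (a := 0) (b := 1) hs
        rwa [intervalIntegrable_iff_integrableOn_Ioc_of_le zero_le_one] at h
      · exact integrableOn_const measure_Ioc_lt_top.ne
    refine Integrable.mono' hbint ?_ ?_
    · exact ((G_contOn hp).mono Ioc_subset_Ioi_self).aestronglyMeasurable measurableSet_Ioc
    · rw [ae_restrict_iff' measurableSet_Ioc]
      filter_upwards with x hx
      obtain ⟨hx0, hx1⟩ := hx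
      have hD : (0:ℝ) < 1 + x ^ p := denom_pos hp hx0
      have h1 : (1:ℝ) ≤ 1 + x ^ p := by
        have := rpow_pos_of_pos hx0 p; linarith
      have hnum : 0 ≤ x ^ s + (x + 1) ^ s := by positivity
      rw [Real.norm_of_nonneg (by exact div_nonneg hnum hD.le)]
      refine le_trans (div_le_self hnum h1) ?_
      have hx1' : x + 1 ≤ 2 := by linarith
      rcases le_or_gt 0 s with hs0 | hs0
      · have : (x+1) ^ s ≤ 2 ^ s := rpow_le_rpow (by linarith) hx1' hs0
        have := le_max_left ((2:ℝ) ^ s) 1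
        gcongr
        linarith
      · have : (x+1) ^ s ≤ 1 := rpow_le_one_of_one_le_of_nonpos (by linarith) hs0.le
        have := le_max_right ((2:ℝ) ^ s) 1
        gcongr
        linarith
  · -- on Ioi 1, bound by (1 + max (2^s) 1) * x ^ (s - p)
    have hbint : IntegrableOn (fun x : ℝ => (1 + max (2 ^ s) 1) * x ^ (s - p)) (Ioi 1) :=
      (integrableOn_Ioi_rpow_of_lt (by linarith) one_pos).const_mul _
    refine Integrable.mono' hbint ?_ ?_
    · exact ((G_contOn hp).mono fun x (hx : x ∈ Ioi (1:ℝ)) => mem_Ioi.mpr (lt_trans one_pos hx)).aestronglyMeasurable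
        measurableSet_Ioi
    · rw [ae_restrict_iff' measurableSet_Ioi]
      filter_upwards with x hx
      have hx1 : (1:ℝ) < x := hx
      have hx0 : (0:ℝ) < x := lt_trans one_pos hx1
      have hD : (0:ℝ) < 1 + x ^ p := denom_pos hp hx0
      have hxp : (0:ℝ) < x ^ p := rpow_pos_of_pos hx0 p
      have hxs : (0:ℝ) < x ^ s := rpow_pos_of_pos hx0 s
      have hnum : 0 ≤ x ^ s + (x + 1) ^ s := by positivity
      simp only [G]
      rw [Real.norm_of_nonneg (div_nonneg hnum hD.le)]
      have hnum2 : x ^ s + (x + 1) ^ s ≤ (1 + max (2 ^ s) 1) * x ^ s := by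
        have hkey : (x + 1) ^ s ≤ max (2 ^ s) 1 * x ^ s := by
          rcases le_or_gt 0 s with hs0 | hs0
          · have h2x : x + 1 ≤ 2 * x := by linarith
            have : (x+1) ^ s ≤ (2*x) ^ s := rpow_le_rpow (by linarith) h2x hs0
            rw [Real.mul_rpow (by norm_num) hx0.le] at this
            have h2 : (2:ℝ) ^ s * x ^ s ≤ max (2 ^ s) 1 * x ^ s :=
              mul_le_mul_of_nonneg_right (le_max_left _ _) hxs.le
            linarith
          · have : (x+1) ^ s ≤ x ^ s := rpow_le_rpow_of_nonpos hx0 (by linarith) hs0.le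
            refine this.trans ?_
            nth_rewrite 1 [← one_mul (x ^ s)]
            gcongr
            exact le_max_right _ _
        linarith
      calc (x ^ s + (x + 1) ^ s) / (1 + x ^ p)
          ≤ ((1 + max (2 ^ s) 1) * x ^ s) / x ^ p := by
            apply div_le_div₀ (by positivity) hnum2 hxp (by linarith)
        _ = (1 + max (2 ^ s) 1) * x ^ (s - p) := by
            rw [Real.rpow_sub hx0, mul_div_assoc]

lemma f_le_G (hp : 0 < p) {x : ℝ} (hx : 0 < x) : f s p x ≤ G s p x := by
  have hD : (0:ℝ) < 1 + x ^ p := denom_pos hp hx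
  apply div_le_div₀ (by positivity) _ hD le_rfl
  have : (0:ℝ) ≤ (x+1) ^ s := rpow_nonneg (by linarith) s
  linarith

lemma f_integrable (hs : -1 < s) (hsp : s + 1 < p) : IntegrableOn (f s p) (Ioi 0) := by
  have hp : 0 < p := by linarith
  refine Integrable.mono' (G_integrable hs hsp) ((f_contOn hp).aestronglyMeasurable measurableSet_Ioi) ?_
  rw [ae_restrict_iff' measurableSet_Ioi]
  filter_upwards with x hx
  have hx0 : (0:ℝ) < x := hx
  simp only [f]
  rw [Real.norm_of_nonneg (div_nonneg (rpow_nonneg hx0.le s) (denom_pos hp hx0).le)]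
  exact f_le_G hp hx0

lemma ceil_bounds {h x : ℝ} (hh : 0 < h) (hx : 0 ≤ x) :
    x ≤ h * (⌈x / h⌉₊ : ℝ) ∧ h * (⌈x / h⌉₊ : ℝ) ≤ x + h := by
  constructor
  · calc x = (x / h) * h := (div_mul_cancel₀ x hh.ne').symm
      _ ≤ (⌈x / h⌉₊ : ℝ) * h := mul_le_mul_of_nonneg_right (Nat.le_ceil _) hh.le
      _ = h * (⌈x / h⌉₊ : ℝ) := mul_comm _ _
  · have h2 : (⌈x / h⌉₊ : ℝ) < x / h + 1 := Nat.ceil_lt_add_one (by positivity)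
    calc h * (⌈x / h⌉₊ : ℝ) ≤ h * (x / h + 1) := mul_le_mul_of_nonneg_left h2.le hh.le
      _ = x + h := by field_simp

lemma iUnion_Ioc {h : ℝ} (hh : 0 < h) :
    Ioi (0:ℝ) = ⋃ i : ℕ, Ioc ((i:ℝ) * h) (((i:ℝ) + 1) * h) := by
  ext x
  simp only [mem_Ioi, mem_iUnion, mem_Ioc]
  constructor
  · intro hx
    have hxh : 0 < x / h := div_pos hx hh
    have hk : 1 ≤ ⌈x / h⌉₊ := Nat.one_le_iff_ne_zero.mpr (Nat.ceil_pos.mpr hxh).ne'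
    refine ⟨⌈x / h⌉₊ - 1, ?_, ?_⟩
    · have h1 : ((⌈x / h⌉₊ - 1 : ℕ) : ℝ) < x / h := by
        rw [← Nat.lt_ceil]
        omega
      calc ((⌈x / h⌉₊ - 1 : ℕ) : ℝ) * h < (x / h) * h := by
            exact mul_lt_mul_of_pos_right h1 hh
        _ = x := div_mul_cancel₀ x hh.ne'
    · have h1 : x / h ≤ (⌈x / h⌉₊ : ℝ) := Nat.le_ceil _
      have h2 : ((⌈x / h⌉₊ - 1 : ℕ) : ℝ) + 1 = (⌈x / h⌉₊ : ℝ) := by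
        push_cast [Nat.cast_sub hk]
        ring
      rw [h2]
      calc x = (x / h) * h := (div_mul_cancel₀ x hh.ne').symm
        _ ≤ (⌈x / h⌉₊ : ℝ) * h := mul_le_mul_of_nonneg_right h1 hh.le
  · rintro ⟨i, h1, h2⟩
    have : (0:ℝ) ≤ (i:ℝ) * h := by positivity
    linarith

lemma ceil_on_piece {h : ℝ} (hh : 0 < h) {i : ℕ} {x : ℝ}
    (hx : x ∈ Ioc ((i:ℝ) * h) (((i:ℝ) + 1) * h)) : ⌈x / h⌉₊ = i + 1 := by
  obtain ⟨h1, h2⟩ := hx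
  rw [Nat.ceil_eq_iff (Nat.succ_ne_zero i)]
  constructor
  · rw [show i + 1 - 1 = i from rfl, lt_div_iff₀ hh]
    linarith [mul_comm (i:ℝ) h]
  · rw [div_le_iff₀ hh]
    push_cast
    linarith

lemma step_integral {h : ℝ} (hh : 0 < h)
    (hint : IntegrableOn (fun x => f s p (h * (⌈x / h⌉₊ : ℝ))) (Ioi 0)) :
    ∫ x in Ioi 0, f s p (h * (⌈x / h⌉₊ : ℝ)) = ∑' i : ℕ, h * f s p (((i:ℝ) + 1) * h) := by
  rw [iUnion_Ioc hh] at hint ⊢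
  have hdisj : Pairwise (Function.onFun Disjoint
      fun i : ℕ => Ioc ((i:ℝ) * h) (((i:ℝ) + 1) * h)) := by
    have key : ∀ i j : ℕ, i < j →
        Disjoint (Ioc ((i:ℝ) * h) (((i:ℝ) + 1) * h)) (Ioc ((j:ℝ) * h) (((j:ℝ) + 1) * h)) := by
      intro i j hij
      rw [Set.disjoint_left]
      rintro x ⟨ha1, ha2⟩ ⟨hb1, hb2⟩
      have hij' : ((i:ℝ) + 1) ≤ (j:ℝ) := by exact_mod_cast hij
      have : ((i:ℝ) + 1) * h ≤ (j:ℝ) * h := mul_le_mul_of_nonneg_right hij' hh.le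
      linarith
    intro i j hij
    rcases hij.lt_or_gt with hlt | hlt
    · exact key i j hlt
    · exact (key j i hlt).symm
  rw [integral_iUnion (fun i => measurableSet_Ioc) hdisj hint]
  refine tsum_congr fun i => ?_
  rw [setIntegral_congr_fun measurableSet_Ioc
      (g := fun _ => f s p (((i:ℝ) + 1) * h)) ?_]
  · rw [setIntegral_const, Real.volume_real_Ioc,
      show ((i:ℝ) + 1) * h - (i:ℝ) * h = h by ring,
      max_eq_left hh.le, smul_eq_mul]
  · intro x hx
    show f s p (h * (⌈x / h⌉₊ : ℝ)) = f s p (((i:ℝ) + 1) * h)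
    rw [ceil_on_piece hh hx]
    congr 1
    push_cast
    ring

lemma step_meas (h : ℝ) :
    Measurable fun x : ℝ => f s p (h * (⌈x / h⌉₊ : ℝ)) := by
  have : (fun x : ℝ => f s p (h * (⌈x / h⌉₊ : ℝ))) =
      (fun k : ℕ => f s p (h * (k : ℝ))) ∘ fun x : ℝ => ⌈x / h⌉₊ := rfl
  rw [this]
  exact measurable_from_top.comp (Nat.measurable_ceil.comp (measurable_id.div_const h))

lemma step_bound (hs : -1 < s) (hsp : s + 1 < p) {h : ℝ} (hh0 : 0 < h) (hh1 : h ≤ 1) :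
    ∀ᵐ x ∂(volume.restrict (Ioi 0)), ‖f s p (h * (⌈x / h⌉₊ : ℝ))‖ ≤ G s p x := by
  have hp : 0 < p := by linarith
  rw [ae_restrict_iff' measurableSet_Ioi]
  filter_upwards with x hx
  have hx0 : (0:ℝ) < x := hx
  obtain ⟨hxy, hyx⟩ := ceil_bounds hh0 hx0.le
  set y := h * (⌈x / h⌉₊ : ℝ) with hy
  have hy0 : 0 < y := lt_of_lt_of_le hx0 hxy
  have hyx1 : y ≤ x + 1 := by linarith
  have hDy : 0 < 1 + y ^ p := denom_pos hp hy0
  have hDx : 0 < 1 + x ^ p := denom_pos hp hx0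
  rw [show f s p y = y ^ s / (1 + y ^ p) from rfl,
    Real.norm_of_nonneg (div_nonneg (rpow_nonneg hy0.le s) hDy.le)]
  have hnum : y ^ s ≤ x ^ s + (x + 1) ^ s := by
    rcases le_or_gt 0 s with hs0 | hs0
    · have h1 : y ^ s ≤ (x + 1) ^ s := rpow_le_rpow hy0.le hyx1 hs0
      have h2 : (0:ℝ) ≤ x ^ s := rpow_nonneg hx0.le s
      linarith
    · have h1 : y ^ s ≤ x ^ s := rpow_le_rpow_of_nonpos hx0 hxy hs0.le
      have h2 : (0:ℝ) ≤ (x + 1) ^ s := rpow_nonneg (by linarith) s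
      linarith
  have hden : 1 + x ^ p ≤ 1 + y ^ p := by
    have := rpow_le_rpow hx0.le hxy hp.le
    linarith
  exact div_le_div₀ (by positivity) hnum hDx hden

lemma tendsto_riemann (hs : -1 < s) (hsp : s + 1 < p) :
    Tendsto (fun h : ℝ => ∑' i : ℕ, h * f s p (((i:ℝ) + 1) * h)) (𝓝[>] 0)
      (𝓝 (∫ x in Ioi 0, f s p x)) := by
  have hp : 0 < p := by linarith
  have hdct : Tendsto (fun h : ℝ => ∫ x in Ioi 0, f s p (h * (⌈x / h⌉₊ : ℝ))) (𝓝[>] 0)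
      (𝓝 (∫ x in Ioi 0, f s p x)) := by
    refine tendsto_integral_filter_of_dominated_convergence (G s p)
      (Eventually.of_forall fun h => (step_meas h).aestronglyMeasurable) ?_
      (G_integrable hs hsp) ?_
    · filter_upwards [Ioc_mem_nhdsGT zero_lt_one] with h hh
      exact step_bound hs hsp hh.1 hh.2
    · rw [ae_restrict_iff' measurableSet_Ioi]
      filter_upwards with x hx
      have hx0 : (0:ℝ) < x := hx
      have harg : Tendsto (fun h : ℝ => h * (⌈x / h⌉₊ : ℝ)) (𝓝[>] 0) (𝓝 x) := by
        have hupper : Tendsto (fun h : ℝ => x + h) (𝓝[>] 0) (𝓝 x) := by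
          have : Tendsto (fun h : ℝ => h) (𝓝[>] 0) (𝓝 0) :=
            tendsto_id.mono_left nhdsWithin_le_nhds
          simpa using tendsto_const_nhds.add this
        refine tendsto_of_tendsto_of_tendsto_of_le_of_le' tendsto_const_nhds hupper ?_ ?_
        · filter_upwards [self_mem_nhdsWithin] with h hh
          exact (ceil_bounds hh hx0.le).1
        · filter_upwards [self_mem_nhdsWithin] with h hh
          exact (ceil_bounds hh hx0.le).2
      exact (((f_contOn hp).continuousAt (Ioi_mem_nhds hx0)).tendsto).comp harg
  have heq : (fun h : ℝ => ∫ x in Ioi 0, f s p (h * (⌈x / h⌉₊ : ℝ)))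
      =ᶠ[nhdsWithin (0:ℝ) (Ioi 0)] fun h : ℝ => ∑' i : ℕ, h * f s p (((i:ℝ) + 1) * h) := by
    filter_upwards [Ioc_mem_nhdsGT zero_lt_one] with h hh
    refine step_integral hh.1 ?_
    exact Integrable.mono' (G_integrable hs hsp) (step_meas h).aestronglyMeasurable
      (step_bound hs hsp hh.1 hh.2)
  exact hdct.congr' heq

lemma integral_pos (hs : -1 < s) (hsp : s + 1 < p) :
    0 < ∫ x in Ioi 0, f s p x := by
  have hp : 0 < p := by linarith
  rw [setIntegral_pos_iff_support_of_nonneg_ae ?_ (f_integrable hs hsp)]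
  · refine lt_of_lt_of_le ?_ (measure_mono (fun x hx => ?_ :
      Ioi (0:ℝ) ⊆ Function.support (f s p) ∩ Ioi 0))
    · rw [Real.volume_Ioi]
      exact ENNReal.zero_lt_top
    · have hx0 : (0:ℝ) < x := hx
      exact ⟨ne_of_gt (div_pos (rpow_pos_of_pos hx0 s) (denom_pos hp hx0)), hx⟩
  · rw [EventuallyLE, ae_restrict_iff' measurableSet_Ioi]
    filter_upwards with x hx
    have hx0 : (0:ℝ) < x := hx
    exact le_of_lt (div_pos (rpow_pos_of_pos hx0 s) (denom_pos hp hx0))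

lemma integral_f_eq {a b : ℝ} (hp : 0 < p) (hb : 0 < b)
    (hab : a + b = 1) (hsb : s = p * b - 1) :
    ∫ x in Ioi 0, f s p x = eulerBeta a b / p := by
  have himg : (fun x : ℝ => (1 + x ^ p)⁻¹) '' Ioi 0 = Ioo 0 1 := by
    apply Subset.antisymm
    · rintro t ⟨x, hx, rfl⟩
      have hx0 : (0:ℝ) < x := hx
      have hxp : 0 < x ^ p := rpow_pos_of_pos hx0 p
      have hD : (0:ℝ) < 1 + x ^ p := by linarith
      exact ⟨inv_pos.mpr hD, inv_lt_one_of_one_lt₀ (by linarith)⟩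
    · rintro t ⟨ht0, ht1⟩
      have h1 : 1 < t⁻¹ := (one_lt_inv₀ ht0).mpr ht1
      refine ⟨(t⁻¹ - 1) ^ p⁻¹, rpow_pos_of_pos (by linarith) _, ?_⟩
      have h2 : ((t⁻¹ - 1) ^ p⁻¹) ^ p = t⁻¹ - 1 := rpow_inv_rpow (by linarith) hp.ne'
      simp only
      rw [h2, show 1 + (t⁻¹ - 1) = t⁻¹ by ring, inv_inv]
  have hderiv : ∀ x ∈ Ioi (0:ℝ), HasDerivWithinAt (fun x : ℝ => (1 + x ^ p)⁻¹)
      (-(p * x ^ (p - 1)) / (1 + x ^ p) ^ 2) (Ioi 0) x := by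
    intro x hx
    have hx0 : (0:ℝ) < x := hx
    have h1 : HasDerivAt (fun x : ℝ => 1 + x ^ p) (p * x ^ (p - 1)) x :=
      (Real.hasDerivAt_rpow_const (Or.inl hx0.ne')).const_add 1
    exact (h1.inv (denom_pos hp hx0).ne').hasDerivWithinAt
  have hinj : InjOn (fun x : ℝ => (1 + x ^ p)⁻¹) (Ioi 0) := by
    have hanti : StrictAntiOn (fun x : ℝ => (1 + x ^ p)⁻¹) (Ioi 0) := by
      intro x hx y hy hxy
      have h1 : x ^ p < y ^ p := rpow_lt_rpow (le_of_lt hx) hxy hp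
      have h2 : (0:ℝ) < 1 + x ^ p := denom_pos hp hx
      exact inv_strictAnti₀ h2 (by linarith)
    exact hanti.injOn
  have key := integral_image_eq_integral_abs_deriv_smul measurableSet_Ioi hderiv hinj
    (fun t => t ^ (a - 1) * (1 - t) ^ (b - 1))
  rw [himg] at key
  have hBeta : eulerBeta a b = ∫ t in Ioo (0:ℝ) 1, t ^ (a - 1) * (1 - t) ^ (b - 1) := by
    rw [eulerBeta, intervalIntegral.integral_of_le zero_le_one, integral_Ioc_eq_integral_Ioo]
  have hcong : (∫ x in Ioi (0:ℝ), |(-(p * x ^ (p - 1)) / (1 + x ^ p) ^ 2)| •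
        (((1 + x ^ p)⁻¹) ^ (a - 1) * (1 - (1 + x ^ p)⁻¹) ^ (b - 1)))
      = ∫ x in Ioi (0:ℝ), p * f s p x := by
    apply setIntegral_congr_fun measurableSet_Ioi
    intro x hx
    have hx0 : (0:ℝ) < x := hx
    have hxp : 0 < x ^ p := rpow_pos_of_pos hx0 p
    have hD : (0:ℝ) < 1 + x ^ p := by linarith
    show |(-(p * x ^ (p - 1)) / (1 + x ^ p) ^ 2)| •
        (((1 + x ^ p)⁻¹) ^ (a - 1) * (1 - (1 + x ^ p)⁻¹) ^ (b - 1))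
      = p * f s p x
    rw [smul_eq_mul]
    rw [abs_div, abs_neg, abs_of_nonneg (by positivity : (0:ℝ) ≤ p * x ^ (p - 1)),
      abs_of_nonneg (by positivity : (0:ℝ) ≤ ((1 + x ^ p) ^ 2))]
    rw [show 1 - (1 + x ^ p)⁻¹ = x ^ p / (1 + x ^ p) by field_simp; ring]
    rw [Real.inv_rpow hD.le, ← Real.rpow_neg hD.le, Real.div_rpow hxp.le hD.le,
      ← Real.rpow_mul hx0.le]
    rw [show ((1 + x ^ p) ^ 2 : ℝ) = (1 + x ^ p) ^ (2:ℝ) by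
      rw [← Real.rpow_natCast (1 + x ^ p) 2]; norm_num]
    have ex : x ^ (p - 1) * x ^ (p * (b - 1)) = x ^ s := by
      rw [← Real.rpow_add hx0]; congr 1; rw [hsb]; ring
    have eD : (1 + x ^ p) ^ (-(a - 1)) / ((1 + x ^ p) ^ (2:ℝ) * (1 + x ^ p) ^ (b - 1))
        = (1 + x ^ p)⁻¹ := by
      rw [← Real.rpow_add hD, ← Real.rpow_sub hD,
        show -(a - 1) - (2 + (b - 1)) = -1 by linarith, Real.rpow_neg_one]
    calc p * x ^ (p - 1) / (1 + x ^ p) ^ (2:ℝ) *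
          ((1 + x ^ p) ^ (-(a - 1)) * (x ^ (p * (b - 1)) / (1 + x ^ p) ^ (b - 1)))
        = p * (x ^ (p - 1) * x ^ (p * (b - 1))) *
          ((1 + x ^ p) ^ (-(a - 1)) / ((1 + x ^ p) ^ (2:ℝ) * (1 + x ^ p) ^ (b - 1))) := by
          ring
      _ = p * x ^ s * (1 + x ^ p)⁻¹ := by rw [ex, eD]
      _ = p * f s p x := by rw [f]; ring
  rw [hcong] at key
  rw [hBeta, key, integral_const_mul, mul_comm, mul_div_assoc, div_self hp.ne', mul_one]

lemma term_eq {n γ : ℝ} (hn : 0 < n) (hp : 0 < p) (hps : p = 2 * γ + s + 1)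
    {c : ℝ} (hc : 0 < c) :
    n ^ (-p⁻¹) * f s p (c * n ^ (-p⁻¹)) = n ^ (2 * γ / p) * (c ^ s / (n + c ^ p)) := by
  have hh0 : 0 < n ^ (-p⁻¹) := rpow_pos_of_pos hn _
  have hhp : (n ^ (-p⁻¹)) ^ p = n⁻¹ := by
    rw [← Real.rpow_mul hn.le, show -p⁻¹ * p = -1 by field_simp, Real.rpow_neg_one]
  have hcp : 0 < c ^ p := rpow_pos_of_pos hc p
  rw [f, Real.mul_rpow hc.le hh0.le, Real.mul_rpow hc.le hh0.le, hhp,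
    show (1:ℝ) + c ^ p * n⁻¹ = (n + c ^ p) / n by field_simp,
    div_div_eq_mul_div]
  rw [show (n ^ (-p⁻¹)) ^ s = n ^ (-p⁻¹ * s) from (Real.rpow_mul hn.le _ _).symm]
  have e2 : n ^ (-p⁻¹) * n ^ (-p⁻¹ * s) * n = n ^ (2 * γ / p) := by
    nth_rewrite 3 [← Real.rpow_one n]
    rw [← Real.rpow_add hn, ← Real.rpow_add hn]
    congr 1
    have hq : 2 * γ + s + 1 ≠ 0 := by rw [← hps]; exact hp.ne'
    rw [hps]
    field_simp
    ring
  calc n ^ (-p⁻¹) * (c ^ s * n ^ (-p⁻¹ * s) * n / (n + c ^ p))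
      = (n ^ (-p⁻¹) * n ^ (-p⁻¹ * s) * n) * (c ^ s * (n + c ^ p)⁻¹) := by ring
    _ = n ^ (2 * γ / p) * (c ^ s / (n + c ^ p)) := by rw [e2]; ring

end Stmt10Aux

open Stmt10Aux

/-- Uniform-allocation risk asymptotics over the Sobolev hyperrectangle:
Σ_{i≥1} i^{2β}/(n + i^{2α+2β+1}) ∼ B̄_H n^{−2α/(2α+2β+1)} with
B̄_H = B(2α/(2α+2β+1), (2β+1)/(2α+2β+1))/(2α+2β+1). -/
theorem stmt10 (α β : ℝ) (hα : 0 < α) (hβ : -(1/2 : ℝ) < β) :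
    Tendsto (fun n : ℝ =>
        (∑' i : ℕ, ((i : ℝ) + 1) ^ (2*β) / (n + ((i : ℝ) + 1) ^ (2*α + 2*β + 1))) /
          ((eulerBeta (2*α/(2*α+2*β+1)) ((2*β+1)/(2*α+2*β+1)) / (2*α+2*β+1)) *
            n ^ (-(2*α)/(2*α+2*β+1))))
      atTop (nhds 1) := by
  have hp : (0:ℝ) < 2*α + 2*β + 1 := by linarith
  set p : ℝ := 2*α + 2*β + 1 with hpdef
  set s : ℝ := 2*β with hsdef
  have hs : (-1:ℝ) < s := by rw [hsdef]; linarith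
  have hsp : s + 1 < p := by rw [hsdef, hpdef]; linarith
  set C : ℝ := eulerBeta (2*α/p) ((s+1)/p) / p with hCdef
  have hI : (∫ x in Ioi (0:ℝ), f s p x) = C := by
    rw [hCdef]
    refine integral_f_eq hp (div_pos (by rw [hsdef]; linarith) hp) ?_ ?_
    · rw [← add_div, div_eq_one_iff_eq hp.ne', hpdef, hsdef]
      ring
    · rw [mul_comm, div_mul_cancel₀ _ hp.ne']
      ring
  have hIpos : 0 < ∫ x in Ioi (0:ℝ), f s p x := integral_pos hs hsp
  have hC : 0 < C := hI ▸ hIpos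
  have h2 : Tendsto (fun n : ℝ => n ^ (-p⁻¹)) atTop (𝓝[>] (0:ℝ)) := by
    rw [tendsto_nhdsWithin_iff]
    constructor
    · exact tendsto_rpow_neg_atTop (inv_pos.mpr hp)
    · filter_upwards [eventually_gt_atTop (0:ℝ)] with n hn
      exact mem_Ioi.mpr (rpow_pos_of_pos hn _)
  have h3 := (tendsto_riemann hs hsp).comp h2
  rw [hI] at h3
  have h4 := h3.div_const C
  rw [div_self hC.ne'] at h4
  refine h4.congr' ?_
  filter_upwards [eventually_gt_atTop (0:ℝ)] with n hn
  show (∑' i : ℕ, n ^ (-p⁻¹) * f s p (((i:ℝ) + 1) * n ^ (-p⁻¹))) / C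
      = (∑' i : ℕ, ((i : ℝ) + 1) ^ s / (n + ((i : ℝ) + 1) ^ p)) / (C * n ^ (-(2*α)/p))
  have hkey : ∀ i : ℕ, n ^ (-p⁻¹) * f s p (((i:ℝ) + 1) * n ^ (-p⁻¹))
      = n ^ (2 * α / p) * (((i:ℝ) + 1) ^ s / (n + ((i:ℝ) + 1) ^ p)) := by
    intro i
    exact term_eq hn hp hpdef (by positivity)
  rw [tsum_congr hkey, tsum_mul_left]
  rw [show -(2*α)/p = -(2*α/p) by ring, Real.rpow_neg hn.le]
  have hnp : 0 < n ^ (2*α/p) := rpow_pos_of_pos hn _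
  field_simp
end

section
/- Let a = (aᵢ) be a positive nonincreasing sequence tending to 0, σᵢ > 0, nᵢ > 0, and suppose t > 0 satisfies Σᵢ σᵢ²(1 − t/aᵢ)₊/(nᵢ aᵢ) = t. Define λᵢ = (1 − t/aᵢ)₊ and θᵢ² = σᵢ² aᵢ (1 − t/aᵢ)₊/(nᵢ t). Then θ = (θᵢ) lies on the boundary of the ellipsoid E(a), i.e., Σᵢ (θᵢ/aᵢ)² = 1, and the risk Σᵢ [σᵢ²λᵢ²/nᵢ + (1−λᵢ)²θᵢ²] equals Σᵢ (σᵢ²/nᵢ)(1 − t/aᵢ)₊. -/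
/-- Saddle point structure of Pinsker's theorem: if t > 0 solves
Σᵢ σᵢ²(1 − t/aᵢ)₊/(nᵢaᵢ) = t, then with λᵢ = (1 − t/aᵢ)₊ and
θᵢ = √(σᵢ² aᵢ (1 − t/aᵢ)₊/(nᵢ t)), the point θ lies on the boundary of the
ellipsoid E(a), i.e. Σᵢ(θᵢ/aᵢ)² = 1, and the risk
Σᵢ[σᵢ²λᵢ²/nᵢ + (1−λᵢ)²θᵢ²] equals Σᵢ(σᵢ²/nᵢ)(1 − t/aᵢ)₊. -/
theorem stmt15 (a σ nn : ℕ → ℝ) (t : ℝ)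
    (ha : ∀ i, 0 < a i) (hmono : Antitone a)
    (hlim : Filter.Tendsto a Filter.atTop (nhds 0))
    (hσ : ∀ i, 0 < σ i) (hnn : ∀ i, 0 < nn i) (ht : 0 < t)
    (hsum1 : Summable (fun i => (σ i) ^ 2 * max (1 - t / a i) 0 / (nn i * a i)))
    (heq : ∑' i, (σ i) ^ 2 * max (1 - t / a i) 0 / (nn i * a i) = t)
    (lam θ : ℕ → ℝ)
    (hlam : ∀ i, lam i = max (1 - t / a i) 0)
    (hθ : ∀ i, θ i = Real.sqrt ((σ i) ^ 2 * a i * max (1 - t / a i) 0 / (nn i * t)))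
    (hsum2 : Summable (fun i =>
      (σ i) ^ 2 * (lam i) ^ 2 / nn i + (1 - lam i) ^ 2 * (θ i) ^ 2)) :
    (∑' i, (θ i / a i) ^ 2 = 1) ∧
    (∑' i, ((σ i) ^ 2 * (lam i) ^ 2 / nn i + (1 - lam i) ^ 2 * (θ i) ^ 2)
      = ∑' i, (σ i) ^ 2 / nn i * max (1 - t / a i) 0) := by
  have hθ2 : ∀ i, (θ i) ^ 2 = (σ i) ^ 2 * a i * max (1 - t / a i) 0 / (nn i * t) := by
    intro i
    rw [hθ, Real.sq_sqrt]
    exact div_nonneg (mul_nonneg (mul_nonneg (sq_nonneg _) (ha i).le) (le_max_right _ _))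
      (mul_nonneg (hnn i).le ht.le)
  constructor
  · have h1 : ∀ i, (θ i / a i) ^ 2
        = (σ i) ^ 2 * max (1 - t / a i) 0 / (nn i * a i) / t := by
      intro i
      rw [div_pow, hθ2]
      have hai := (ha i).ne'
      have hni := (hnn i).ne'
      field_simp
    rw [tsum_congr h1, tsum_div_const, heq, div_self ht.ne']
  · refine tsum_congr fun i => ?_
    rw [hlam, hθ2]
    rcases le_or_gt (1 - t / a i) 0 with h | h
    · rw [max_eq_right h]
      simp
    · rw [max_eq_left h.le]
      have hai := (ha i).ne'
      have hni := (hnn i).ne'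
      field_simp
      ring
end

section
/- Let α > 0, β > −1/2 and define t_s(n) as the solution of (Σ_k k^β [1 − t_s k^α]₊^{1/2}) · (Σ_i i^{α+β} [1 − t_s i^α]₊^{1/2}) = n t_s, with sums over positive integers. Then, as n → ∞, t_s(n) ∼ d_s^{−α} where d_s ∼ (α²(3α+2β+2) n / (2(β+1) B²((β+1)/α, 3/2)))^{1/(2(α+β+1))} and B denotes the Euler beta function. -/
open Filter MeasureTheory Set intervalIntegral

lemma eulerBeta_eq_Gamma {x y : ℝ} (hx : 0 < x) (hy : 0 < y) :
    eulerBeta x y = Real.Gamma x * Real.Gamma y / Real.Gamma (x + y) := by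
  have hcast : (eulerBeta x y : ℂ) = Complex.betaIntegral x y := by
    rw [eulerBeta, Complex.betaIntegral, ← intervalIntegral.integral_ofReal]
    refine intervalIntegral.integral_congr fun t ht => ?_
    rw [Set.uIcc_of_le (by norm_num : (0:ℝ) ≤ 1)] at ht
    push_cast
    rw [Complex.ofReal_cpow ht.1, Complex.ofReal_cpow (by linarith [ht.2] : (0:ℝ) ≤ 1 - t)]
    push_cast
    ring_nf
  have h := Complex.Gamma_mul_Gamma_eq_betaIntegral
    (by simpa using hx : 0 < (x:ℂ).re) (by simpa using hy : 0 < (y:ℂ).re)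
  rw [← hcast, ← Complex.ofReal_add, Complex.Gamma_ofReal, Complex.Gamma_ofReal,
    Complex.Gamma_ofReal, ← Complex.ofReal_mul, ← Complex.ofReal_mul, Complex.ofReal_inj] at h
  have hG : Real.Gamma (x + y) ≠ 0 := (Real.Gamma_pos_of_pos (by linarith)).ne'
  field_simp [h]
  linear_combination -h

lemma eulerBeta_pos {x y : ℝ} (hx : 0 < x) (hy : 0 < y) : 0 < eulerBeta x y := by
  rw [eulerBeta_eq_Gamma hx hy]
  have := Real.Gamma_pos_of_pos hx
  have := Real.Gamma_pos_of_pos hy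
  have := Real.Gamma_pos_of_pos (by linarith : (0:ℝ) < x + y)
  positivity

lemma eulerBeta_succ {x y : ℝ} (hx : 0 < x) (hy : 0 < y) :
    eulerBeta (x + 1) y = x / (x + y) * eulerBeta x y := by
  rw [eulerBeta_eq_Gamma (by linarith) hy, eulerBeta_eq_Gamma hx hy,
    Real.Gamma_add_one hx.ne', show x + 1 + y = (x + y) + 1 by ring,
    Real.Gamma_add_one (by positivity)]
  have h1 : Real.Gamma (x + y) ≠ 0 := (Real.Gamma_pos_of_pos (by linarith)).ne'
  have h2 : x + y ≠ 0 := by positivity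
  field_simp

noncomputable def gfun (α γ : ℝ) (u : ℝ) : ℝ := u ^ γ * Real.sqrt (max (1 - u ^ α) 0)

lemma gfun_nonneg (α γ : ℝ) {u : ℝ} (hu : 0 ≤ u) : 0 ≤ gfun α γ u :=
  mul_nonneg (Real.rpow_nonneg hu γ) (Real.sqrt_nonneg _)

lemma gfun_zero_of_one_le {α γ : ℝ} (hα : 0 < α) {u : ℝ} (hu : 1 ≤ u) : gfun α γ u = 0 := by
  unfold gfun
  have h1 : (1:ℝ) ≤ u ^ α := Real.one_le_rpow hu hα.le
  rw [max_eq_right (by linarith), Real.sqrt_zero, mul_zero]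

lemma gfun_measurable (α γ : ℝ) : Measurable (gfun α γ) := by
  unfold gfun; fun_prop

lemma gfun_continuousAt {α γ : ℝ} {u : ℝ} (hu : 0 < u) : ContinuousAt (gfun α γ) u := by
  unfold gfun
  have h1 : ContinuousAt (fun u : ℝ => u ^ γ) u :=
    Real.continuousAt_rpow_const u γ (Or.inl hu.ne')
  have h2 : ContinuousAt (fun u : ℝ => u ^ α) u :=
    Real.continuousAt_rpow_const u α (Or.inl hu.ne')
  exact h1.mul (Real.continuous_sqrt.continuousAt.comp
    ((continuousAt_const.sub h2).max continuousAt_const))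

lemma gfun_sqrt_le_one {α : ℝ} {u : ℝ} (hu : 0 ≤ u) : Real.sqrt (max (1 - u ^ α) 0) ≤ 1 := by
  have h0 : (0:ℝ) ≤ u ^ α := Real.rpow_nonneg hu α
  have : max (1 - u ^ α) 0 ≤ 1 := max_le (by linarith) zero_le_one
  calc Real.sqrt (max (1 - u ^ α) 0) ≤ Real.sqrt 1 := Real.sqrt_le_sqrt this
    _ = 1 := Real.sqrt_one

lemma integral_gfun {α γ : ℝ} (hα : 0 < α) :
    ∫ x in Ioi (0:ℝ), gfun α γ x = α⁻¹ * eulerBeta ((γ + 1) / α) (3/2) := by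
  set x₀ : ℝ := (γ + 1) / α with hx₀
  set φ : ℝ → ℝ := fun s => s ^ (x₀ - 1) * Real.sqrt (max (1 - s) 0) with hφ
  set f : ℝ → ℝ := fun s => α⁻¹ * φ s with hf
  have h1 := MeasureTheory.integral_comp_rpow_Ioi f (p := α) hα.ne'
  have h2 : ∀ x ∈ Ioi (0:ℝ), (|α| * x ^ (α - 1)) • f (x ^ α) = gfun α γ x := by
    intro x hx
    have hx' : (0:ℝ) < x := hx
    have e1 : (x ^ α) ^ (x₀ - 1) = x ^ (γ + 1 - α) := by
      rw [← Real.rpow_mul hx'.le]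
      congr 1
      rw [hx₀]
      field_simp
    have e2 : x ^ (α - 1) * x ^ (γ + 1 - α) = x ^ γ := by
      rw [← Real.rpow_add hx']
      congr 1
      ring
    simp only [hf, hφ, smul_eq_mul, abs_of_pos hα, gfun]
    rw [e1, show α * x ^ (α - 1) * (α⁻¹ * (x ^ (γ + 1 - α) * Real.sqrt (max (1 - x ^ α) 0)))
        = (α * α⁻¹) * ((x ^ (α - 1) * x ^ (γ + 1 - α)) * Real.sqrt (max (1 - x ^ α) 0)) by ring,
      mul_inv_cancel₀ hα.ne', e2, one_mul]
  rw [setIntegral_congr_fun measurableSet_Ioi h2] at h1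
  rw [h1, hf]
  rw [MeasureTheory.integral_const_mul]
  congr 1
  have h3 : ∀ s ∈ Ioi (0:ℝ), φ s = Set.indicator (Ioc (0:ℝ) 1) φ s := by
    intro s hs
    rcases le_or_gt s 1 with hs1 | hs1
    · rw [Set.indicator_of_mem (Set.mem_Ioc.mpr ⟨hs, hs1⟩)]
    · rw [Set.indicator_of_notMem (fun hmem => absurd hmem.2 (not_le.mpr hs1)), hφ]
      simp only
      rw [max_eq_right (by linarith), Real.sqrt_zero, mul_zero]
  rw [setIntegral_congr_fun measurableSet_Ioi h3, setIntegral_indicator measurableSet_Ioc,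
    Set.inter_eq_self_of_subset_right Set.Ioc_subset_Ioi_self]
  rw [eulerBeta, intervalIntegral.integral_of_le zero_le_one]
  refine setIntegral_congr_fun measurableSet_Ioc fun t ht => ?_
  rw [hφ]
  simp only
  rw [max_eq_left (by linarith [ht.2]), Real.sqrt_eq_rpow]
  norm_num

lemma riemann_sum_tendsto (g G : ℝ → ℝ)
    (hmeas : Measurable g)
    (hcont : ∀ x : ℝ, 0 < x → ContinuousAt g x)
    (hGint : IntegrableOn G (Ioi 0))
    (hdom : ∀ x p : ℝ, 0 < x → x ≤ p → p ≤ x + 1 → |g p| ≤ G x) :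
    Tendsto (fun h : ℝ => ∑' k : ℕ, h * g (h * (k + 1))) (nhdsWithin 0 (Ioi 0))
      (nhds (∫ x in Ioi 0, g x)) := by
  set F : ℝ → ℝ → ℝ := fun h x => g (h * ((⌊x / h⌋ : ℤ) + 1)) with hF
  have hmem : Ioc (0:ℝ) 1 ∈ nhdsWithin (0:ℝ) (Ioi 0) :=
    Ioc_mem_nhdsGT_of_mem (by norm_num : (0:ℝ) ∈ Ico 0 1)
  -- basic floor facts
  have key : ∀ h : ℝ, 0 < h → ∀ x : ℝ, 0 < x →
      x ≤ h * ((⌊x / h⌋ : ℤ) + 1) ∧ h * ((⌊x / h⌋ : ℤ) + 1) ≤ x + h := by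
    intro h hh x hx
    have h1 : (⌊x / h⌋ : ℝ) ≤ x / h := Int.floor_le _
    have h2 : x / h < (⌊x / h⌋ : ℝ) + 1 := Int.lt_floor_add_one _
    constructor
    · have := (div_lt_iff₀ hh).mp h2
      nlinarith
    · have h1' : (⌊x / h⌋ : ℝ) * h ≤ x := by
        have := mul_le_mul_of_nonneg_right h1 hh.le
        rwa [div_mul_cancel₀ x hh.ne'] at this
      nlinarith
  have hFmeas : ∀ h : ℝ, Measurable (F h) := by
    intro h
    exact hmeas.comp <| measurable_const.mul
      ((measurable_from_top.comp ((measurable_id.div_const h).floor)).add measurable_const)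
  have hFbound : ∀ h : ℝ, 0 < h → h ≤ 1 → ∀ x : ℝ, 0 < x → |F h x| ≤ G x := by
    intro h hh h1 x hx
    obtain ⟨hp1, hp2⟩ := key h hh x hx
    exact hdom x _ hx hp1 (by linarith)
  -- Step 1 : identification of the integral with the sum, for 0 < h ≤ 1
  have hsum : ∀ h : ℝ, 0 < h → h ≤ 1 →
      (∫ x in Ioi (0:ℝ), F h x) = ∑' k : ℕ, h * g (h * (k + 1)) := by
    intro h hh h1
    have hunion : (⋃ k : ℕ, Ico (h * k) (h * (k + 1))) = Ici (0:ℝ) := by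
      ext x
      simp only [mem_iUnion, mem_Ico, mem_Ici]
      constructor
      · rintro ⟨k, hk, -⟩
        have : (0:ℝ) ≤ h * k := by positivity
        linarith
      · intro hx
        refine ⟨⌊x / h⌋.toNat, ?_, ?_⟩
        · have h1' : (⌊x / h⌋ : ℝ) ≤ x / h := Int.floor_le _
          have : ((⌊x / h⌋.toNat : ℤ) : ℝ) ≤ x / h := by
            rcases le_or_gt 0 ⌊x / h⌋ with hfl | hfl
            · rw [Int.toNat_of_nonneg hfl]; exact h1'
            · have : ((⌊x / h⌋.toNat : ℤ) : ℝ) = 0 := by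
                rw [Int.toNat_of_nonpos hfl.le]; norm_num
              rw [this]; positivity
          have := (le_div_iff₀ hh).mp (by exact_mod_cast this)
          push_cast at this ⊢
          linarith [this]
        · have h2 : x / h < (⌊x / h⌋ : ℝ) + 1 := Int.lt_floor_add_one _
          have hfl : 0 ≤ ⌊x / h⌋ := Int.floor_nonneg.mpr (by positivity)
          have : x / h < ((⌊x / h⌋.toNat : ℤ) : ℝ) + 1 := by
            rw [Int.toNat_of_nonneg hfl]; exact h2
          have := (div_lt_iff₀ hh).mp this
          push_cast at this ⊢
          nlinarith [this]
    have hdisj : Pairwise (Function.onFun Disjoint fun k : ℕ => Ico (h * k) (h * (k + 1)))  := by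
      intro i j hij
      rw [Function.onFun, Set.Ico_disjoint_Ico]
      rcases hij.lt_or_gt with hlt | hlt
      · calc min (h * ((i:ℝ) + 1)) (h * ((j:ℝ) + 1)) ≤ h * ((i:ℝ) + 1) := min_le_left _ _
          _ ≤ h * (j:ℝ) := by
              have : (i:ℝ) + 1 ≤ j := by exact_mod_cast hlt
              nlinarith
          _ ≤ max (h * (i:ℝ)) (h * (j:ℝ)) := le_max_right _ _
      · calc min (h * ((i:ℝ) + 1)) (h * ((j:ℝ) + 1)) ≤ h * ((j:ℝ) + 1) := min_le_right _ _
          _ ≤ h * (i:ℝ) := by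
              have : (j:ℝ) + 1 ≤ i := by exact_mod_cast hlt
              nlinarith
          _ ≤ max (h * (i:ℝ)) (h * (j:ℝ)) := le_max_left _ _
    have hrestr : volume.restrict (Ici (0:ℝ)) = volume.restrict (Ioi 0) :=
      (Measure.restrict_congr_set Ioi_ae_eq_Ici).symm
    have hFint : IntegrableOn (F h) (Ici (0:ℝ)) := by
      refine Integrable.mono' (hGint.congr_set_ae Ioi_ae_eq_Ici.symm) ((hFmeas h).aestronglyMeasurable) ?_
      rw [hrestr, ae_restrict_iff' measurableSet_Ioi]
      exact Eventually.of_forall fun x hx => hFbound h hh h1 x hx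
    have hconst : ∀ k : ℕ, ∫ x in Ico (h * k) (h * (k + 1)), F h x = h * g (h * (k + 1)) := by
      intro k
      have heq : ∀ x ∈ Ico (h * (k:ℝ)) (h * (k + 1)), F h x = g (h * (k + 1)) := by
        intro x hx
        have hfl : ⌊x / h⌋ = (k : ℤ) := by
          rw [Int.floor_eq_iff]
          constructor
          · push_cast
            rw [le_div_iff₀ hh]
            linarith [hx.1]
          · push_cast
            rw [div_lt_iff₀ hh]
            linarith [hx.2]
        simp only [hF, hfl]
        push_cast
        ring_nf
      rw [setIntegral_congr_fun measurableSet_Ico heq, setIntegral_const, measureReal_def, Real.volume_Ico,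
        show h * ((k:ℝ) + 1) - h * k = h by ring, ENNReal.toReal_ofReal hh.le, smul_eq_mul]
    calc (∫ x in Ioi (0:ℝ), F h x) = ∫ x in Ici (0:ℝ), F h x := by
          rw [← MeasureTheory.integral_Ici_eq_integral_Ioi]
      _ = ∫ x in ⋃ k : ℕ, Ico (h * k) (h * (k + 1)), F h x := by rw [hunion]
      _ = ∑' k : ℕ, ∫ x in Ico (h * k) (h * (k + 1)), F h x := by
          rw [MeasureTheory.integral_iUnion (fun k => measurableSet_Ico) hdisj
            (hunion ▸ hFint)]
      _ = ∑' k : ℕ, h * g (h * (k + 1)) := by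
          exact tsum_congr hconst
  -- Step 2 : dominated convergence
  have hDCT : Tendsto (fun h : ℝ => ∫ x in Ioi (0:ℝ), F h x) (nhdsWithin 0 (Ioi 0))
      (nhds (∫ x in Ioi 0, g x)) := by
    refine tendsto_integral_filter_of_dominated_convergence G ?_ ?_ hGint ?_
    · exact Eventually.of_forall fun h => ((hFmeas h).aestronglyMeasurable)
    · filter_upwards [hmem] with h hh
      rw [ae_restrict_iff' measurableSet_Ioi]
      exact Eventually.of_forall fun x hx => hFbound h hh.1 hh.2 x hx
    · rw [ae_restrict_iff' measurableSet_Ioi]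
      refine Eventually.of_forall fun x hx => ?_
      have hxp : (0:ℝ) < x := hx
      have hp : Tendsto (fun h : ℝ => h * ((⌊x / h⌋ : ℤ) + 1)) (nhdsWithin 0 (Ioi 0)) (nhds x) := by
        refine tendsto_of_tendsto_of_tendsto_of_le_of_le'
          (h := fun h : ℝ => x + h) (tendsto_const_nhds : Tendsto (fun _ : ℝ => x) _ _) ?_ ?_ ?_
        · have : Tendsto (fun h : ℝ => x + h) (nhds (0:ℝ)) (nhds (x + 0)) :=
            (continuous_const.add continuous_id).tendsto 0
          rw [add_zero] at this
          exact this.mono_left nhdsWithin_le_nhds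
        · filter_upwards [self_mem_nhdsWithin] with h hh
          exact (key h hh x hxp).1
        · filter_upwards [self_mem_nhdsWithin] with h hh
          exact (key h hh x hxp).2
      exact ((hcont x hxp).tendsto).comp hp
  refine hDCT.congr' ?_
  filter_upwards [hmem] with h hh
  exact hsum h hh.1 hh.2

lemma sumAsymp {α γ : ℝ} (hα : 0 < α) (hγ : -1 < γ) :
    Tendsto (fun t : ℝ => t ^ ((γ + 1) / α) *
        ∑' k : ℕ, ((k : ℝ) + 1) ^ γ * Real.sqrt (max (1 - t * ((k : ℝ) + 1) ^ α) 0))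
      (nhdsWithin 0 (Ioi 0)) (nhds (α⁻¹ * eulerBeta ((γ + 1) / α) (3/2))) := by
  set G : ℝ → ℝ := Set.indicator (Ioc (0:ℝ) 1) (fun x => x ^ γ + 1) with hG
  have hGint : IntegrableOn G (Ioi 0) := by
    have h1 : IntegrableOn (fun x : ℝ => x ^ γ) (Ioc (0:ℝ) 1) :=
      ((integrableOn_Ioo_rpow_iff zero_lt_one).mpr hγ).congr_set_ae Ioo_ae_eq_Ioc.symm
    have h2 : IntegrableOn (fun x : ℝ => x ^ γ + 1) (Ioc (0:ℝ) 1) :=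
      h1.add (integrableOn_const measure_Ioc_lt_top.ne)
    exact (h2.integrable_indicator measurableSet_Ioc).integrableOn
  have hdom : ∀ x p : ℝ, 0 < x → x ≤ p → p ≤ x + 1 → |gfun α γ p| ≤ G x := by
    intro x p hx hxp hpx
    have hp : 0 < p := lt_of_lt_of_le hx hxp
    rw [abs_of_nonneg (gfun_nonneg α γ hp.le)]
    rcases le_or_gt x 1 with hx1 | hx1
    · rw [hG, Set.indicator_of_mem (Set.mem_Ioc.mpr ⟨hx, hx1⟩)]
      rcases le_or_gt γ 0 with hγ0 | hγ0
      · have h1 : p ^ γ ≤ x ^ γ := Real.rpow_le_rpow_of_nonpos hx hxp hγ0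
        have h2 : Real.sqrt (max (1 - p ^ α) 0) ≤ 1 := gfun_sqrt_le_one hp.le
        have h3 : gfun α γ p ≤ p ^ γ := by
          unfold gfun
          nlinarith [Real.rpow_nonneg hp.le γ, Real.sqrt_nonneg (max (1 - p ^ α) 0)]
        have h4 : (0:ℝ) ≤ x ^ γ := Real.rpow_nonneg hx.le γ
        linarith
      · rcases le_or_gt p 1 with hp1 | hp1
        · have h1 : p ^ γ ≤ 1 := Real.rpow_le_one hp.le hp1 hγ0.le
          have h2 : Real.sqrt (max (1 - p ^ α) 0) ≤ 1 := gfun_sqrt_le_one hp.le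
          have h4 : (0:ℝ) ≤ x ^ γ := Real.rpow_nonneg hx.le γ
          have h3 : gfun α γ p ≤ 1 := by
            unfold gfun
            nlinarith [Real.rpow_nonneg hp.le γ, Real.sqrt_nonneg (max (1 - p ^ α) 0)]
          linarith
        · rw [gfun_zero_of_one_le hα hp1.le]
          have h4 : (0:ℝ) ≤ x ^ γ := Real.rpow_nonneg hx.le γ
          linarith
    · rw [hG, Set.indicator_of_notMem (fun hmem => absurd hmem.2 (not_le.mpr hx1)),
        gfun_zero_of_one_le hα (by linarith)]
  have hR := riemann_sum_tendsto (gfun α γ) G (gfun_measurable α γ)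
    (fun x hx => gfun_continuousAt hx) hGint hdom
  rw [integral_gfun hα] at hR
  have hmap : Tendsto (fun t : ℝ => t ^ (1 / α)) (nhdsWithin 0 (Ioi 0))
      (nhdsWithin 0 (Ioi 0)) := by
    rw [tendsto_nhdsWithin_iff]
    constructor
    · have h0 : ContinuousAt (fun t : ℝ => t ^ (1 / α)) 0 :=
        Real.continuousAt_rpow_const 0 (1 / α) (Or.inr (by positivity))
      have := h0.tendsto
      rw [Real.zero_rpow (by positivity : (1:ℝ)/α ≠ 0)] at this
      exact this.mono_left nhdsWithin_le_nhds
    · filter_upwards [self_mem_nhdsWithin] with t ht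
      exact Real.rpow_pos_of_pos ht _
  have hcomp := hR.comp hmap
  refine hcomp.congr' ?_
  filter_upwards [self_mem_nhdsWithin] with t ht
  have ht' : (0:ℝ) < t := ht
  have hh : (0:ℝ) < t ^ (1 / α) := Real.rpow_pos_of_pos ht' _
  show ∑' k : ℕ, t ^ (1 / α) * gfun α γ (t ^ (1 / α) * ((k : ℝ) + 1)) = _
  rw [← tsum_mul_left]
  refine tsum_congr fun k => ?_
  have hk : (0:ℝ) < (k : ℝ) + 1 := by positivity
  have e0 : (t ^ (1 / α)) ^ α = t := by
    rw [← Real.rpow_mul ht'.le, one_div_mul_cancel hα.ne', Real.rpow_one]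
  have e1 : (t ^ (1 / α) * ((k : ℝ) + 1)) ^ α = t * ((k : ℝ) + 1) ^ α := by
    rw [Real.mul_rpow hh.le hk.le, e0]
  have e2 : (t ^ (1 / α) * ((k : ℝ) + 1)) ^ γ = t ^ (γ / α) * ((k : ℝ) + 1) ^ γ := by
    rw [Real.mul_rpow hh.le hk.le, ← Real.rpow_mul ht'.le]
    ring_nf
  have e3 : t ^ ((γ + 1) / α) = t ^ (1 / α) * t ^ (γ / α) := by
    rw [← Real.rpow_add ht']
    congr 1
    ring
  unfold gfun
  rw [e1, e2, e3]
  ring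

/-- Asymptotics of the sub-optimal Pinsker parameter for Sobolev ellipsoids: if
t_s(n) > 0 solves (Σ_k k^β[1 − t_s k^α]₊^{1/2})(Σ_i i^{α+β}[1 − t_s i^α]₊^{1/2}) = n t_s,
then t_s(n) ∼ d_s(n)^{−α} with
d_s(n) = (α²(3α+2β+2)n / (2(β+1)B²((β+1)/α, 3/2)))^{1/(2(α+β+1))}. -/
theorem stmt16 (α β : ℝ) (hα : 0 < α) (hβ : -(1/2 : ℝ) < β)
    (ts : ℝ → ℝ)
    (hts : ∀ n : ℝ, 0 < n → 0 < ts n ∧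
      (∑' k : ℕ, ((k : ℝ) + 1) ^ β * Real.sqrt (max (1 - ts n * ((k : ℝ) + 1) ^ α) 0)) *
      (∑' i : ℕ, ((i : ℝ) + 1) ^ (α + β) *
          Real.sqrt (max (1 - ts n * ((i : ℝ) + 1) ^ α) 0)) = n * ts n) :
    Tendsto (fun n : ℝ => ts n /
        ((α^2 * (3*α + 2*β + 2) * n /
            (2*(β+1) * (eulerBeta ((β+1)/α) (3/2))^2)) ^ (1/(2*(α+β+1)))) ^ (-α))
      atTop (nhds 1) := by
  have hβ1 : (0:ℝ) < β + 1 := by linarith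
  have hαβ1 : (0:ℝ) < α + β + 1 := by linarith
  set S : ℝ → ℝ → ℝ := fun γ t =>
    ∑' k : ℕ, ((k : ℝ) + 1) ^ γ * Real.sqrt (max (1 - t * ((k : ℝ) + 1) ^ α) 0) with hS
  -- summability
  have hsummable : ∀ γ t : ℝ, 0 < t →
      Summable (fun k : ℕ => ((k : ℝ) + 1) ^ γ * Real.sqrt (max (1 - t * ((k : ℝ) + 1) ^ α) 0)) := by
    intro γ t ht
    refine summable_of_ne_finset_zero
      (s := Finset.range ⌈(1/t) ^ ((1:ℝ)/α)⌉₊) (fun k hk => ?_)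
    rw [Finset.mem_range, not_lt] at hk
    have h1 : (1/t) ^ ((1:ℝ)/α) ≤ (k : ℝ) + 1 := by
      calc (1/t) ^ ((1:ℝ)/α) ≤ (⌈(1/t) ^ ((1:ℝ)/α)⌉₊ : ℝ) := Nat.le_ceil _
        _ ≤ (k : ℝ) := by exact_mod_cast hk
        _ ≤ (k : ℝ) + 1 := by linarith
    have h2 : 1/t ≤ ((k:ℝ) + 1) ^ α := by
      calc 1/t = ((1/t) ^ ((1:ℝ)/α)) ^ α := by
            rw [← Real.rpow_mul (by positivity), one_div_mul_cancel hα.ne', Real.rpow_one]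
        _ ≤ ((k:ℝ) + 1) ^ α := Real.rpow_le_rpow (by positivity) h1 hα.le
    have h3 : (1:ℝ) ≤ t * ((k:ℝ) + 1) ^ α := by
      rw [div_le_iff₀ ht] at h2
      nlinarith
    rw [max_eq_right (by linarith), Real.sqrt_zero, mul_zero]
  have hSnonneg : ∀ γ t : ℝ, 0 ≤ S γ t := by
    intro γ t
    exact tsum_nonneg fun k => by positivity
  have hSmono : ∀ γ : ℝ, ∀ s t : ℝ, 0 < s → s ≤ t → S γ t ≤ S γ s := by
    intro γ s t hs hst
    refine Summable.tsum_le_tsum (fun k => ?_) (hsummable γ t (lt_of_lt_of_le hs hst)) (hsummable γ s hs)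
    have hk : (0:ℝ) ≤ ((k:ℝ)+1)^α := by positivity
    have h1 : max (1 - t * ((k:ℝ)+1)^α) 0 ≤ max (1 - s * ((k:ℝ)+1)^α) 0 :=
      max_le_max (by nlinarith) le_rfl
    have h2 : Real.sqrt (max (1 - t * ((k:ℝ)+1)^α) 0) ≤
        Real.sqrt (max (1 - s * ((k:ℝ)+1)^α) 0) := Real.sqrt_le_sqrt h1
    have h3 : (0:ℝ) ≤ ((k:ℝ)+1)^γ := by positivity
    exact mul_le_mul_of_nonneg_left h2 h3
  -- ts n → 0 within Ioi 0
  have h0 : Tendsto ts atTop (nhdsWithin 0 (Ioi 0)) := by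
    rw [tendsto_nhdsWithin_iff]
    constructor
    · rw [NormedAddCommGroup.tendsto_nhds_zero]
      intro ε hε
      set C : ℝ := S β ε * S (α+β) ε + 1 with hC
      have hC0 : 0 < C := by
        have := mul_nonneg (hSnonneg β ε) (hSnonneg (α+β) ε)
        linarith
      filter_upwards [eventually_gt_atTop (max 1 (C/ε))] with n hn
      have hn1 : (1:ℝ) < n := lt_of_le_of_lt (le_max_left _ _) hn
      have hn0 : (0:ℝ) < n := by linarith
      obtain ⟨htpos, heq⟩ := hts n hn0
      rw [Real.norm_eq_abs, abs_of_pos htpos]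
      by_contra hcon
      push_neg at hcon
      have hεt : ε ≤ ts n := hcon
      have h1 : S β (ts n) ≤ S β ε := hSmono β ε (ts n) hε hεt
      have h2 : S (α+β) (ts n) ≤ S (α+β) ε := hSmono (α+β) ε (ts n) hε hεt
      have h3 : n * ts n ≤ C - 1 := by
        rw [← heq]
        have : S β (ts n) * S (α+β) (ts n) ≤ S β ε * S (α+β) ε :=
          mul_le_mul h1 h2 (hSnonneg (α+β) (ts n)) (hSnonneg β ε)
        calc (∑' k : ℕ, ((k : ℝ) + 1) ^ β * Real.sqrt (max (1 - ts n * ((k : ℝ) + 1) ^ α) 0)) *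
            (∑' i : ℕ, ((i : ℝ) + 1) ^ (α + β) *
              Real.sqrt (max (1 - ts n * ((i : ℝ) + 1) ^ α) 0))
            = S β (ts n) * S (α+β) (ts n) := rfl
          _ ≤ S β ε * S (α+β) ε := this
          _ = C - 1 := by rw [hC]; ring
      have h4 : C / ε < n := lt_of_le_of_lt (le_max_right _ _) hn
      have h5 : C < n * ε := by
        rw [div_lt_iff₀ hε] at h4
        linarith
      nlinarith
    · filter_upwards [eventually_gt_atTop (0:ℝ)] with n hn
      exact (hts n hn).1
  -- beta constants
  set B₁ : ℝ := eulerBeta ((β+1)/α) (3/2) with hB₁def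
  have hx0 : (0:ℝ) < (β+1)/α := by positivity
  have hB₁ : 0 < B₁ := eulerBeta_pos hx0 (by norm_num)
  have hB₂ : eulerBeta ((α+β+1)/α) (3/2) = (β+1)/α / ((β+1)/α + 3/2) * B₁ := by
    rw [show (α+β+1)/α = (β+1)/α + 1 by field_simp; ring]
    exact eulerBeta_succ hx0 (by norm_num)
  -- key limit
  set e : ℝ := 2*(α+β+1)/α with he
  have hkey : Tendsto (fun n : ℝ => n * ts n ^ e) atTop
      (nhds ((α⁻¹ * B₁) * (α⁻¹ * eulerBeta (((α+β)+1)/α) (3/2)))) := by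
    have hK1 := (sumAsymp hα (by linarith : (-1:ℝ) < β)).comp h0
    have hK2 := (sumAsymp hα (by linarith : (-1:ℝ) < α + β)).comp h0
    have hprod := hK1.mul hK2
    refine Tendsto.congr' ?_ hprod
    filter_upwards [eventually_gt_atTop (0:ℝ)] with n hn
    obtain ⟨htpos, heq⟩ := hts n hn
    show ts n ^ ((β+1)/α) * S β (ts n) * (ts n ^ (((α+β)+1)/α) * S (α+β) (ts n)) = n * ts n ^ e
    have h1 : ts n ^ ((β+1)/α) * S β (ts n) * (ts n ^ (((α+β)+1)/α) * S (α+β) (ts n))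
        = (S β (ts n) * S (α+β) (ts n)) * ts n ^ ((β+1)/α + ((α+β)+1)/α) := by
      rw [Real.rpow_add htpos]
      ring
    have heq' : S β (ts n) * S (α+β) (ts n) = n * ts n := heq
    rw [h1, heq']
    have h2 : ts n ^ e = ts n * ts n ^ ((β+1)/α + ((α+β)+1)/α) := by
      rw [show e = 1 + ((β+1)/α + ((α+β)+1)/α) by rw [he]; field_simp; ring,
        Real.rpow_add htpos, Real.rpow_one]
    rw [mul_assoc, ← h2]
  -- the constant
  set Cc : ℝ := α^2*(3*α+2*β+2)/(2*(β+1)*B₁^2) with hCcdef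
  have h3αβ : (0:ℝ) < 3*α+2*β+2 := by linarith
  have hCc : 0 < Cc := by positivity
  have hCK : Cc * ((α⁻¹ * B₁) * (α⁻¹ * eulerBeta (((α+β)+1)/α) (3/2))) = 1 := by
    rw [show ((α+β)+1)/α = (α+β+1)/α by ring, hB₂, hCcdef]
    have hne : (β+1)/α + 3/2 ≠ 0 := by positivity
    field_simp
    ring
  have hlim : Tendsto (fun n : ℝ => Cc * (n * ts n ^ e)) atTop (nhds 1) := by
    have := hkey.const_mul Cc
    rwa [hCK] at this
  have hfin : Tendsto (fun n : ℝ => (Cc * (n * ts n ^ e)) ^ (α/(2*(α+β+1)))) atTop (nhds 1) := by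
    have := hlim.rpow_const (p := α/(2*(α+β+1))) (Or.inl one_ne_zero)
    rwa [Real.one_rpow] at this
  refine Tendsto.congr' ?_ hfin
  filter_upwards [eventually_gt_atTop (0:ℝ)] with n hn
  obtain ⟨htpos, -⟩ := hts n hn
  have hCn : 0 < Cc * n := by positivity
  set d : ℝ := 1/(2*(α+β+1)) with hd
  have hbig : α^2 * (3*α + 2*β + 2) * n / (2*(β+1) * B₁^2) = Cc * n := by
    rw [hCcdef]
    ring
  rw [hbig]
  have h4 : ((Cc * n) ^ d) ^ (-α) = ((Cc * n) ^ (d * α))⁻¹ := by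
    rw [← Real.rpow_mul hCn.le, show d * (-α) = -(d * α) by ring, Real.rpow_neg hCn.le]
  have h6 : ts n / ((Cc * n) ^ (d * α))⁻¹ = ts n * (Cc * n) ^ (d * α) := by
    field_simp
  rw [h4, h6]
  have h5 : Cc * (n * ts n ^ e) = (Cc * n) * ts n ^ e := by ring
  rw [h5, show α/(2*(α+β+1)) = d * α by rw [hd]; ring,
    Real.mul_rpow hCn.le (Real.rpow_nonneg htpos.le e), ← Real.rpow_mul htpos.le,
    show e * (d * α) = 1 by rw [he, hd]; field_simp, Real.rpow_one]
  ring
end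

section
/- Let α > 0 and β > −1/2. Then as n → ∞, n^{−1}(Σ_{i=1}^{∞} i^β [1 − t_s(n) i^α]₊^{1/2})² ∼ B_E · n^{−α/(α+β+1)}, where t_s(n) is as in the sub-optimal ellipsoid allocation (t_s(n) ∼ d_s^{−α} with d_s = (α²(3α+2β+2) n/(2(β+1)B²((β+1)/α, 3/2)))^{1/(2(α+β+1))}) and B_E = (B²((β+1)/α, 3/2)/α²)^{α/(α+β+1)} · ((3α+2β+2)/(2(β+1)))^{(β+1)/(α+β+1)}. -/
open Filter

open MeasureTheory Set

namespace Stmt17Aux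


noncomputable def gg (α β u : ℝ) : ℝ := u ^ β * Real.sqrt (max (1 - u ^ α) 0)

noncomputable def ff (γ s : ℝ) : ℝ := s ^ (γ - 1) * Real.sqrt (max (1 - s) 0)

lemma measurable_ff (γ : ℝ) : Measurable (ff γ) := by unfold ff; fun_prop

lemma measurable_gg (α β : ℝ) : Measurable (gg α β) := by unfold gg; fun_prop

lemma sqrt_max_le_one {x : ℝ} (hx : 0 ≤ x) : Real.sqrt (max (1 - x) 0) ≤ 1 := by
  calc Real.sqrt (max (1 - x) 0) ≤ Real.sqrt 1 := by
        apply Real.sqrt_le_sqrt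
        exact max_le (by linarith) (by norm_num)
    _ = 1 := Real.sqrt_one

lemma ff_nonneg {γ s : ℝ} (hs : 0 ≤ s) : 0 ≤ ff γ s :=
  mul_nonneg (Real.rpow_nonneg hs _) (Real.sqrt_nonneg _)

lemma gg_nonneg {α β u : ℝ} (hu : 0 ≤ u) : 0 ≤ gg α β u :=
  mul_nonneg (Real.rpow_nonneg hu _) (Real.sqrt_nonneg _)

lemma ff_le {γ s : ℝ} (hs : 0 ≤ s) : ff γ s ≤ s ^ (γ - 1) := by
  calc ff γ s ≤ s ^ (γ-1) * 1 :=
        mul_le_mul_of_nonneg_left (sqrt_max_le_one hs) (Real.rpow_nonneg hs _)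
    _ = _ := mul_one _

lemma gg_le {α β u : ℝ} (hu : 0 ≤ u) : gg α β u ≤ u ^ β := by
  calc gg α β u ≤ u ^ β * 1 :=
        mul_le_mul_of_nonneg_left (sqrt_max_le_one (Real.rpow_nonneg hu _))
          (Real.rpow_nonneg hu _)
    _ = _ := mul_one _

lemma gg_eq_zero {α β u : ℝ} (hα : 0 < α) (hu : 1 < u) : gg α β u = 0 := by
  have h1 : 1 < u ^ α := by
    rw [Real.one_lt_rpow_iff_of_pos (by linarith)]
    exact Or.inl ⟨hu, hα⟩
  have : max (1 - u ^ α) 0 = 0 := max_eq_right (by linarith)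
  simp [gg, this]

lemma integrableOn_ff {γ : ℝ} (hγ : 0 < γ) : IntegrableOn (ff γ) (Ioc 0 1) := by
  have h1 : IntegrableOn (fun s : ℝ => s ^ (γ - 1)) (Ioc 0 1) :=
    (intervalIntegral.intervalIntegrable_rpow' (by linarith)).1
  apply h1.mono' ((measurable_ff γ).aestronglyMeasurable)
  filter_upwards [ae_restrict_mem measurableSet_Ioc] with s hs
  rw [Real.norm_eq_abs, abs_of_nonneg (ff_nonneg hs.1.le)]
  exact ff_le hs.1.le

lemma max_eq' {s : ℝ} (hs : s ≤ 1) : max (1 - s) 0 = 1 - s := max_eq_left (by linarith)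

lemma eulerBeta_eq {γ : ℝ} : eulerBeta γ (3/2) = ∫ s in Ioc (0:ℝ) 1, ff γ s := by
  rw [eulerBeta, intervalIntegral.integral_of_le zero_le_one]
  apply setIntegral_congr_fun measurableSet_Ioc
  intro t ht
  dsimp only
  rw [ff, max_eq' ht.2, show (3:ℝ)/2 - 1 = 1/2 by norm_num, ← Real.sqrt_eq_rpow]

lemma eulerBeta_pos {γ : ℝ} (hγ : 0 < γ) : 0 < eulerBeta γ (3/2) := by
  rw [eulerBeta_eq]
  rw [setIntegral_pos_iff_support_of_nonneg_ae ?_ (integrableOn_ff hγ)]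
  · apply lt_of_lt_of_le _ (measure_mono (?_ : Ioo (0:ℝ) (1:ℝ) ⊆ _))
    · simp [Real.volume_Ioo]
    · intro s hs
      constructor
      · simp only [Function.mem_support, ff]
        have h1 : 0 < s ^ (γ-1) := Real.rpow_pos_of_pos hs.1 _
        have h2 : 0 < Real.sqrt (max (1-s) 0) := by
          apply Real.sqrt_pos.2
          rw [max_eq' hs.2.le]
          linarith [hs.2]
        positivity
      · exact ⟨hs.1, hs.2.le⟩
  · filter_upwards [ae_restrict_mem measurableSet_Ioc] with s hs
    exact ff_nonneg hs.1.le

lemma integral_Ioi_ff {γ : ℝ} (hγ : 0 < γ) :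
    ∫ s in Ioi (0:ℝ), ff γ s = eulerBeta γ (3/2) := by
  rw [eulerBeta_eq]
  have h1 : ∀ s ∈ Ioi (0:ℝ), ff γ s = (Ioc (0:ℝ) 1).indicator (ff γ) s := by
    intro s hs
    by_cases h : s ≤ 1
    · rw [indicator_of_mem (mem_Ioc.2 ⟨hs, h⟩)]
    · rw [indicator_of_notMem (fun hmem => h hmem.2)]
      push_neg at h
      have : max (1 - s) 0 = 0 := max_eq_right (by linarith)
      simp [ff, this]
  rw [setIntegral_congr_fun measurableSet_Ioi h1, setIntegral_indicator measurableSet_Ioc,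
    inter_eq_right.2 (fun s hs => hs.1)]

lemma integrableOn_ff_Ioi {γ : ℝ} (hγ : 0 < γ) : IntegrableOn (ff γ) (Ioi 0) := by
  have h2 := ((integrableOn_ff hγ).integrable_indicator measurableSet_Ioc).integrableOn
    (s := Ioi (0:ℝ))
  apply h2.congr_fun ?_ measurableSet_Ioi
  intro s hs
  by_cases h : s ≤ 1
  · rw [indicator_of_mem (mem_Ioc.2 ⟨hs, h⟩)]
  · rw [indicator_of_notMem (fun hmem => h hmem.2)]
    push_neg at h
    have : max (1 - s) 0 = 0 := max_eq_right (by linarith)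
    simp [ff, this]

lemma integral_gg {α β : ℝ} (hα : 0 < α) (hβ : -1 < β) :
    ∫ u in Ioi (0:ℝ), gg α β u = eulerBeta ((β+1)/α) (3/2) / α := by
  set γ := (β+1)/α with hγdef
  have hγ : 0 < γ := div_pos (by linarith) hα
  have key := integral_comp_rpow_Ioi (ff γ) (p := α) hα.ne'
  have h2 : ∀ x ∈ Ioi (0:ℝ), (|α| * x ^ (α-1)) • ff γ (x ^ α) = α * gg α β x := by
    intro x hx
    have hx0 : (0:ℝ) < x := hx
    have h4 : α * γ = β + 1 := by rw [hγdef]; field_simp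
    have hax : α * (γ - 1) = β + 1 - α := by
      calc α * (γ - 1) = α * γ - α := by ring
        _ = β + 1 - α := by rw [h4]; 
    have hxx : x ^ (α - 1) * x ^ (β + 1 - α) = x ^ β := by
      rw [← Real.rpow_add hx0]; norm_num
    rw [abs_of_pos hα, smul_eq_mul, ff, gg, ← Real.rpow_mul hx0.le, hax,
      mul_assoc α, ← mul_assoc (x ^ (α - 1)), hxx]
  rw [setIntegral_congr_fun measurableSet_Ioi h2, MeasureTheory.integral_const_mul,
    integral_Ioi_ff hγ] at key
  rw [eq_div_iff hα.ne', mul_comm]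
  exact key



noncomputable def DD (β : ℝ) : ℝ → ℝ :=
  (Ioc (0:ℝ) 1).indicator (fun x => x ^ β + (x+1) ^ β)

lemma integrable_DD {β : ℝ} (hβ : -1 < β) : Integrable (DD β) := by
  apply IntegrableOn.integrable_indicator ?_ measurableSet_Ioc
  apply Integrable.add
  · exact (intervalIntegral.intervalIntegrable_rpow' hβ).1
  · have : IntegrableOn (fun x : ℝ => (x+1)^β) (Icc 0 1) := by
      apply ContinuousOn.integrableOn_compact isCompact_Icc
      apply ContinuousOn.rpow_const (by fun_prop)
      intro x hx; left; intro hc; have := hx.1; linarith [hc ▸ this]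
    exact this.mono_set Ioc_subset_Icc_self

lemma ceil_lb {h x : ℝ} (hh : 0 < h) : x ≤ h * (⌈x / h⌉ : ℤ) := by
  have := Int.le_ceil (x / h)
  calc x = h * (x / h) := by field_simp
    _ ≤ h * (⌈x / h⌉ : ℤ) := by
        apply mul_le_mul_of_nonneg_left this hh.le

lemma ceil_ub {h x : ℝ} (hh : 0 < h) : h * (⌈x / h⌉ : ℤ) ≤ x + h := by
  have h1 : ((⌈x / h⌉ : ℤ) : ℝ) < x / h + 1 := Int.ceil_lt_add_one _
  have h2 : h * (⌈x / h⌉ : ℤ) ≤ h * (x / h + 1) :=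
    mul_le_mul_of_nonneg_left h1.le hh.le
  have h3 : h * (x / h + 1) = x + h := by field_simp
  linarith

lemma phi_le {α β h x : ℝ} (hα : 0 < α) (hh : h ∈ Ioc (0:ℝ) 1) (hx : 0 < x) :
    gg α β (h * (⌈x / h⌉ : ℤ)) ≤ DD β x := by
  set y := h * ((⌈x / h⌉ : ℤ) : ℝ) with hy
  have hxy : x ≤ y := ceil_lb hh.1
  have hyx : y ≤ x + h := ceil_ub hh.1
  have hy0 : 0 < y := lt_of_lt_of_le hx hxy
  by_cases hx1 : x ≤ 1
  · rw [DD, indicator_of_mem (mem_Ioc.2 ⟨hx, hx1⟩)]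
    have hb : gg α β y ≤ y ^ β := gg_le hy0.le
    rcases le_or_gt β 0 with hbs | hbs
    · have h1 : y ^ β ≤ x ^ β := Real.rpow_le_rpow_of_nonpos hx hxy hbs
      have h2 : (0:ℝ) ≤ (x+1) ^ β := Real.rpow_nonneg (by linarith) _
      linarith
    · have h1 : y ^ β ≤ (x+1) ^ β :=
        Real.rpow_le_rpow hy0.le (by linarith [hh.2]) hbs.le
      have h2 : (0:ℝ) ≤ x ^ β := Real.rpow_nonneg hx.le _
      linarith
  · push_neg at hx1
    rw [DD, indicator_of_notMem (fun hm => absurd (mem_Ioc.1 hm).2 (not_le.2 hx1))]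
    rw [gg_eq_zero hα (lt_of_lt_of_le hx1 hxy)]

lemma phi_tendsto {α β x : ℝ} (hα : 0 < α) (hx : 0 < x) :
    Tendsto (fun h : ℝ => gg α β (h * (⌈x / h⌉ : ℤ))) (nhdsWithin 0 (Ioi 0))
      (nhds (gg α β x)) := by
  have h1 : Tendsto (fun h : ℝ => h * ((⌈x / h⌉ : ℤ) : ℝ)) (nhdsWithin 0 (Ioi 0))
      (nhds x) := by
    refine tendsto_of_tendsto_of_tendsto_of_le_of_le' (g := fun _ : ℝ => x)
      (h := fun h : ℝ => x + h) tendsto_const_nhds ?_ ?_ ?_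
    · have : Tendsto (fun h : ℝ => x + h) (nhds (0:ℝ)) (nhds (x + 0)) :=
        (continuous_const.add continuous_id).tendsto 0
      rw [add_zero] at this
      exact this.mono_left nhdsWithin_le_nhds
    · filter_upwards [self_mem_nhdsWithin] with h hh
      exact ceil_lb hh
    · filter_upwards [self_mem_nhdsWithin] with h hh
      exact ceil_ub hh
  have hmaxc : ContinuousAt (fun u : ℝ => max (1 - u ^ α) 0) x :=
    (continuousAt_const.sub (Real.continuousAt_rpow_const x α (Or.inl hx.ne'))).max
      continuousAt_const
  have hsq : ContinuousAt (fun u : ℝ => Real.sqrt (max (1 - u ^ α) 0)) x :=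
    Real.continuous_sqrt.continuousAt.comp hmaxc
  have h2 : ContinuousAt (gg α β) x :=
    (Real.continuousAt_rpow_const x β (Or.inl hx.ne')).mul hsq
  exact (h2.tendsto.comp h1 : _)

lemma measurable_phi (α β : ℝ) {h : ℝ} (hh : 0 < h) :
    Measurable fun x : ℝ => gg α β (h * (⌈x / h⌉ : ℤ)) := by
  apply (measurable_gg α β).comp
  apply Measurable.const_mul
  have hmono : Monotone fun x : ℝ => ((⌈x / h⌉ : ℤ) : ℝ) := by
    intro a b hab
    have h1 : a / h ≤ b / h := by gcongr
    show ((⌈a / h⌉ : ℤ) : ℝ) ≤ ((⌈b / h⌉ : ℤ) : ℝ)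
    exact_mod_cast Int.ceil_le_ceil h1
  exact hmono.measurable

lemma sum_eq_integral {α β : ℝ} (hα : 0 < α) (hβ : -1 < β) {h : ℝ}
    (hh : h ∈ Ioc (0:ℝ) 1) :
    h * ∑' i : ℕ, gg α β (h * ((i:ℝ)+1)) =
      ∫ x in Ioi (0:ℝ), gg α β (h * (⌈x / h⌉ : ℤ)) := by
  have hh0 : 0 < h := hh.1
  have hU : (⋃ i : ℕ, Ioc (h*(i:ℝ)) (h*((i:ℝ)+1))) = Ioi (0:ℝ) := by
    ext x
    simp only [mem_iUnion, mem_Ioc, mem_Ioi]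
    constructor
    · rintro ⟨i, h1, _⟩
      exact lt_of_le_of_lt (by positivity) h1
    · intro hx
      have h1 : (1:ℤ) ≤ ⌈x/h⌉ := by
        have h0 : (0:ℤ) < ⌈x/h⌉ := by
          rw [Int.lt_ceil]
          push_cast
          positivity
        omega
      refine ⟨(⌈x/h⌉ - 1).toNat, ?_, ?_⟩
      · have hcast : (((⌈x/h⌉ - 1).toNat : ℤ) : ℝ) = ((⌈x/h⌉ : ℤ) : ℝ) - 1 := by
          rw [Int.toNat_of_nonneg (by omega)]; push_cast; ring
        rw [show (((⌈x/h⌉ - 1).toNat : ℕ) : ℝ) = (((⌈x/h⌉ - 1).toNat : ℤ) : ℝ) by push_cast; rfl,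
          hcast]
        have h2 : ((⌈x/h⌉ : ℤ) : ℝ) - 1 < x / h := by
          have := Int.ceil_lt_add_one (x/h); linarith
        calc h * (((⌈x/h⌉ : ℤ) : ℝ) - 1) < h * (x / h) :=
              mul_lt_mul_of_pos_left h2 hh0
          _ = x := by field_simp
      · have hcast : (((⌈x/h⌉ - 1).toNat : ℕ) : ℝ) + 1 = ((⌈x/h⌉ : ℤ) : ℝ) := by
          rw [show (((⌈x/h⌉ - 1).toNat : ℕ) : ℝ) = (((⌈x/h⌉ - 1).toNat : ℤ) : ℝ) by push_cast; rfl,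
            Int.toNat_of_nonneg (by omega)]
          push_cast; ring
        rw [hcast]
        exact ceil_lb hh0
  have hdisj : Pairwise (Function.onFun Disjoint fun i : ℕ => Ioc (h*(i:ℝ)) (h*((i:ℝ)+1))) := by
    have key : ∀ i j : ℕ, i < j →
        Disjoint (Ioc (h*(i:ℝ)) (h*((i:ℝ)+1))) (Ioc (h*(j:ℝ)) (h*((j:ℝ)+1))) := by
      intro i j hij
      apply Set.Ioc_disjoint_Ioc.2
      have hij' : (i:ℝ)+1 ≤ j := by exact_mod_cast hij
      calc min (h*((i:ℝ)+1)) (h*((j:ℝ)+1)) ≤ h*((i:ℝ)+1) := min_le_left _ _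
        _ ≤ h*(j:ℝ) := by nlinarith
        _ ≤ max (h*(i:ℝ)) (h*(j:ℝ)) := le_max_right _ _
    intro i j hij
    rcases hij.lt_or_gt with hlt | hlt
    · exact key _ _ hlt
    · exact (key _ _ hlt).symm
  have hint : IntegrableOn (fun x => gg α β (h * (⌈x / h⌉ : ℤ))) (Ioi 0) := by
    apply Integrable.mono' (integrable_DD hβ).integrableOn
      (measurable_phi α β hh0).aestronglyMeasurable
    filter_upwards [ae_restrict_mem measurableSet_Ioi] with x hx
    rw [Real.norm_eq_abs, abs_of_nonneg (gg_nonneg (lt_of_lt_of_le hx (ceil_lb hh0)).le)]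
    exact phi_le hα hh hx
  rw [← hU] at hint ⊢
  rw [integral_iUnion (fun i => measurableSet_Ioc) hdisj hint]
  have hterm : ∀ i : ℕ, (∫ x in Ioc (h*(i:ℝ)) (h*((i:ℝ)+1)), gg α β (h * (⌈x / h⌉ : ℤ)))
      = h * gg α β (h*((i:ℝ)+1)) := by
    intro i
    have heq : EqOn (fun x : ℝ => gg α β (h * (⌈x / h⌉ : ℤ)))
        (fun _ : ℝ => gg α β (h*((i:ℝ)+1))) (Ioc (h*(i:ℝ)) (h*((i:ℝ)+1))) := by
      intro x hx
      have hc : ⌈x/h⌉ = (i:ℤ)+1 := by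
        rw [Int.ceil_eq_iff]
        constructor
        · push_cast
          have : h * (i:ℝ) < x := hx.1
          rw [show ((i:ℝ) + 1 - 1) = (i:ℝ) by ring]
          rw [lt_div_iff₀ hh0]
          linarith [this]
        · push_cast
          rw [div_le_iff₀ hh0]
          have : x ≤ h * ((i:ℝ)+1) := hx.2
          linarith
      simp only [hc]
      push_cast
      rfl
    rw [setIntegral_congr_fun measurableSet_Ioc heq, setIntegral_const, measureReal_def, Real.volume_Ioc,
      ENNReal.toReal_ofReal (by nlinarith [hh0.le] : (0:ℝ) ≤ h*((i:ℝ)+1) - h*(i:ℝ)),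
      smul_eq_mul]
    congr 1
    ring
  rw [tsum_congr hterm]
  exact (tsum_mul_left).symm

lemma riemann {α β : ℝ} (hα : 0 < α) (hβ : -1 < β) (L : ℝ)
    (hL : ∫ u in Ioi (0:ℝ), gg α β u = L) :
    Tendsto (fun h : ℝ => h * ∑' i : ℕ, gg α β (h * ((i:ℝ)+1)))
      (nhdsWithin 0 (Ioi 0)) (nhds L) := by
  rw [← hL]
  have main : Tendsto (fun h : ℝ => ∫ x in Ioi (0:ℝ), gg α β (h * (⌈x / h⌉ : ℤ)))
      (nhdsWithin 0 (Ioi 0)) (nhds (∫ x in Ioi (0:ℝ), gg α β x)) := by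
    apply tendsto_integral_filter_of_dominated_convergence (DD β)
    · filter_upwards [self_mem_nhdsWithin] with h hh
      exact (measurable_phi α β hh).aestronglyMeasurable
    · filter_upwards [Ioc_mem_nhdsGT_of_mem (left_mem_Ico.2 zero_lt_one)] with h hh
      rw [ae_restrict_iff' measurableSet_Ioi]
      apply ae_of_all
      intro x hx
      rw [Real.norm_eq_abs, abs_of_nonneg (gg_nonneg (lt_of_lt_of_le hx (ceil_lb hh.1)).le)]
      exact phi_le hα hh hx
    · exact (integrable_DD hβ).integrableOn
    · rw [ae_restrict_iff' measurableSet_Ioi]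
      apply ae_of_all
      intro x hx
      exact phi_tendsto hα hx
  apply main.congr'
  filter_upwards [Ioc_mem_nhdsGT_of_mem (left_mem_Ico.2 zero_lt_one)] with h hh
  exact (sum_eq_integral hα hβ hh).symm

lemma sum_eq {α β : ℝ} (hα : 0 < α) {t : ℝ} (ht : 0 < t) :
    (∑' i : ℕ, ((i : ℝ) + 1) ^ β * Real.sqrt (max (1 - t * ((i : ℝ) + 1) ^ α) 0))
      = (t ^ (1/α : ℝ)) ^ (-(β+1)) *
        (t ^ (1/α : ℝ) * ∑' i : ℕ, gg α β (t ^ (1/α : ℝ) * ((i:ℝ)+1))) := by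
  set h : ℝ := t ^ (1/α : ℝ) with hhdef
  have hh0 : 0 < h := Real.rpow_pos_of_pos ht _
  have hha : h ^ α = t := by
    rw [hhdef, ← Real.rpow_mul ht.le, one_div, inv_mul_cancel₀ hα.ne', Real.rpow_one]
  have hterm : ∀ i : ℕ, gg α β (h * ((i:ℝ)+1))
      = h ^ β * (((i:ℝ)+1) ^ β * Real.sqrt (max (1 - t * ((i:ℝ)+1) ^ α) 0)) := by
    intro i
    have hi : (0:ℝ) ≤ (i:ℝ)+1 := by positivity
    have h1 : (h * ((i:ℝ)+1)) ^ β = h ^ β * ((i:ℝ)+1) ^ β := Real.mul_rpow hh0.le hi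
    have h2 : (h * ((i:ℝ)+1)) ^ α = t * ((i:ℝ)+1) ^ α := by
      rw [Real.mul_rpow hh0.le hi, hha]
    rw [gg, h1, h2]
    ring
  rw [tsum_congr hterm, tsum_mul_left, ← mul_assoc, ← mul_assoc]
  have hone : h ^ (-(β+1)) * h * h ^ β = 1 := by
    nth_rewrite 2 [← Real.rpow_one h]
    rw [← Real.rpow_add hh0, ← Real.rpow_add hh0]
    norm_num
  rw [hone, one_mul]

lemma alg (α β B n q R t : ℝ) (hα : 0 < α) (hβ : 0 < β + 1) (hB : 0 < B)
    (hn : 0 < n) (hq : 0 < q) (hR : 0 < R)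
    (ht : t = q * ((α^2 * (3*α + 2*β + 2) * n / (2*(β+1) * B^2)) ^ (1/(2*(α+β+1)))) ^ (-α)) :
    (n⁻¹ * ((t ^ (1/α : ℝ)) ^ (-(β+1)) * R) ^ 2) /
      ((B^2/α^2) ^ (α/(α+β+1)) * ((3*α+2*β+2)/(2*(β+1))) ^ ((β+1)/(α+β+1)) *
        n ^ (-(α/(α+β+1))))
    = q ^ (-(2*(β+1)/α)) * (α / B * R) ^ 2 := by
  subst ht
  have hp : (0:ℝ) < α+β+1 := by linarith
  have he3 : (0:ℝ) < 3*α+2*β+2 := by linarith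
  have h2b : (0:ℝ) < 2*(β+1) := by linarith
  have hc0 : 0 < α^2 * (3*α + 2*β + 2) * n / (2*(β+1) * B^2) :=
    div_pos (mul_pos (mul_pos (pow_pos hα 2) he3) hn) (mul_pos h2b (pow_pos hB 2))
  have hX : 0 < (α^2 * (3*α + 2*β + 2) * n / (2*(β+1) * B^2)) ^ (1/(2*(α+β+1))) :=
    Real.rpow_pos_of_pos hc0 _
  have hY : 0 < ((α^2 * (3*α + 2*β + 2) * n / (2*(β+1) * B^2)) ^ (1/(2*(α+β+1)))) ^ (-α) :=
    Real.rpow_pos_of_pos hX _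
  have ht0 : 0 < q * ((α^2 * (3*α + 2*β + 2) * n / (2*(β+1) * B^2)) ^ (1/(2*(α+β+1)))) ^ (-α) :=
    mul_pos hq hY
  have hT : 0 < (q * ((α^2 * (3*α + 2*β + 2) * n / (2*(β+1) * B^2)) ^ (1/(2*(α+β+1)))) ^ (-α)) ^ (1/α : ℝ) :=
    Real.rpow_pos_of_pos ht0 _
  have hh' : 0 < ((q * ((α^2 * (3*α + 2*β + 2) * n / (2*(β+1) * B^2)) ^ (1/(2*(α+β+1)))) ^ (-α)) ^ (1/α : ℝ)) ^ (-(β+1)) :=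
    Real.rpow_pos_of_pos hT _
  have hnum : 0 < n⁻¹ * (((q * ((α^2 * (3*α + 2*β + 2) * n / (2*(β+1) * B^2)) ^ (1/(2*(α+β+1)))) ^ (-α)) ^ (1/α : ℝ)) ^ (-(β+1)) * R) ^ 2 :=
    mul_pos (inv_pos.2 hn) (pow_pos (mul_pos hh' hR) 2)
  have hden : 0 < (B^2/α^2) ^ (α/(α+β+1)) * ((3*α+2*β+2)/(2*(β+1))) ^ ((β+1)/(α+β+1)) *
      n ^ (-(α/(α+β+1))) :=
    mul_pos (mul_pos (Real.rpow_pos_of_pos (div_pos (pow_pos hB 2) (pow_pos hα 2)) _)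
      (Real.rpow_pos_of_pos (div_pos he3 h2b) _)) (Real.rpow_pos_of_pos hn _)
  have hLHS := div_pos hnum hden
  have hRHS : 0 < q ^ (-(2*(β+1)/α)) * (α / B * R) ^ 2 :=
    mul_pos (Real.rpow_pos_of_pos hq _) (pow_pos (mul_pos (div_pos hα hB) hR) 2)
  rw [← Real.exp_log hLHS, ← Real.exp_log hRHS]
  congr 1
  rw [Real.log_div hnum.ne' hden.ne']
  simp (disch := positivity) only [Real.log_mul, Real.log_rpow, Real.log_pow,
    Real.log_inv, Real.log_div]
  push_cast
  field_simp
  ring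



end Stmt17Aux

open Stmt17Aux MeasureTheory Set in
/-- Sharp asymptotics of the sub-optimal allocation risk over the Sobolev ellipsoid:
with t_s(n) ∼ d_s(n)^{−α}, d_s(n) = (α²(3α+2β+2)n/(2(β+1)B²((β+1)/α,3/2)))^{1/(2(α+β+1))},
one has n^{−1}(Σ_i i^β[1 − t_s(n) i^α]₊^{1/2})² ∼ B_E n^{−α/(α+β+1)} with
B_E = (B²((β+1)/α,3/2)/α²)^{α/(α+β+1)} ((3α+2β+2)/(2(β+1)))^{(β+1)/(α+β+1)}. -/
theorem stmt17 (α β : ℝ) (hα : 0 < α) (hβ : -(1/2 : ℝ) < β)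
    (ts : ℝ → ℝ) (hpos : ∀ n : ℝ, 0 < n → 0 < ts n)
    (hts : Tendsto (fun n : ℝ => ts n /
        ((α^2 * (3*α + 2*β + 2) * n /
            (2*(β+1) * (eulerBeta ((β+1)/α) (3/2))^2)) ^ (1/(2*(α+β+1)))) ^ (-α))
      atTop (nhds 1)) :
    Tendsto (fun n : ℝ =>
        (n⁻¹ * (∑' i : ℕ, ((i : ℝ) + 1) ^ β *
            Real.sqrt (max (1 - ts n * ((i : ℝ) + 1) ^ α) 0)) ^ 2) /
          (((eulerBeta ((β+1)/α) (3/2))^2 / α^2) ^ (α/(α+β+1)) *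
            ((3*α+2*β+2)/(2*(β+1))) ^ ((β+1)/(α+β+1)) * n ^ (-(α/(α+β+1)))))
      atTop (nhds 1) := by
  have hβ1 : (0:ℝ) < β + 1 := by linarith
  have hβ' : (-1:ℝ) < β := by linarith
  have hγ : 0 < (β+1)/α := div_pos hβ1 hα
  set B := eulerBeta ((β+1)/α) (3/2) with hBdef
  have hB : 0 < B := eulerBeta_pos hγ
  have hp : (0:ℝ) < α+β+1 := by linarith
  have he3 : (0:ℝ) < 3*α+2*β+2 := by linarith
  have h2b : (0:ℝ) < 2*(β+1) := by linarith
  have hYpos : ∀ n : ℝ, 0 < n →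
      0 < ((α^2 * (3*α + 2*β + 2) * n / (2*(β+1) * B^2)) ^ (1/(2*(α+β+1)))) ^ (-α) :=
    fun n hn => Real.rpow_pos_of_pos (Real.rpow_pos_of_pos
      (div_pos (mul_pos (mul_pos (pow_pos hα 2) he3) hn) (mul_pos h2b (pow_pos hB 2))) _) _
  -- Y tends to 0
  have hYlim : Tendsto (fun n : ℝ =>
      ((α^2 * (3*α + 2*β + 2) * n / (2*(β+1) * B^2)) ^ (1/(2*(α+β+1)))) ^ (-α))
      atTop (nhds 0) := by
    have h1 : Tendsto (fun n : ℝ => α^2 * (3*α + 2*β + 2) * n / (2*(β+1) * B^2))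
        atTop atTop :=
      (tendsto_id.const_mul_atTop (mul_pos (pow_pos hα 2) he3)).atTop_div_const
        (mul_pos h2b (pow_pos hB 2))
    have h2 : Tendsto (fun y : ℝ => (y ^ (1/(2*(α+β+1)))) ^ (-α)) atTop (nhds 0) :=
      (tendsto_rpow_neg_atTop hα).comp (tendsto_rpow_atTop (by positivity))
    exact h2.comp h1
  -- ts tends to 0 within Ioi 0
  have hts0 : Tendsto ts atTop (nhdsWithin 0 (Ioi 0)) := by
    rw [tendsto_nhdsWithin_iff]
    constructor
    · have h1 := hts.mul hYlim
      rw [one_mul] at h1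
      apply h1.congr'
      filter_upwards [eventually_gt_atTop 0] with n hn
      exact div_mul_cancel₀ _ (hYpos n hn).ne'
    · filter_upwards [eventually_gt_atTop 0] with n hn
      exact hpos n hn
  -- rpow 1/α tends to 0 within Ioi 0
  have hrp : Tendsto (fun t : ℝ => t ^ (1/α : ℝ)) (nhdsWithin 0 (Ioi 0))
      (nhdsWithin 0 (Ioi 0)) := by
    rw [tendsto_nhdsWithin_iff]
    constructor
    · have hc : ContinuousAt (fun t : ℝ => t ^ (1/α : ℝ)) 0 :=
        Real.continuousAt_rpow_const 0 (1/α) (Or.inr (by positivity))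
      have h5 : Tendsto (fun t : ℝ => t ^ (1/α : ℝ)) (nhdsWithin 0 (Ioi 0))
          (nhds ((0:ℝ) ^ (1/α : ℝ))) :=
        hc.tendsto.mono_left (nhdsWithin_le_nhds (s := Ioi 0))
      rwa [Real.zero_rpow (by positivity : (0:ℝ) < 1/α).ne'] at h5
    · filter_upwards [self_mem_nhdsWithin] with t ht
      exact Real.rpow_pos_of_pos ht _
  have hh : Tendsto (fun n : ℝ => ts n ^ (1/α : ℝ)) atTop (nhdsWithin 0 (Ioi 0)) :=
    hrp.comp hts0
  have hR : Tendsto (fun n : ℝ => ts n ^ (1/α : ℝ) *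
      ∑' i : ℕ, gg α β (ts n ^ (1/α : ℝ) * ((i:ℝ)+1))) atTop (nhds (B/α)) :=
    (riemann hα hβ' (B/α) (integral_gg hα hβ')).comp hh
  have hRpos : ∀ᶠ n : ℝ in atTop, 0 < ts n ^ (1/α : ℝ) *
      ∑' i : ℕ, gg α β (ts n ^ (1/α : ℝ) * ((i:ℝ)+1)) :=
    hR.eventually (lt_mem_nhds (by positivity : (0:ℝ) < B/α))
  -- the comparison function
  have hG : Tendsto (fun n : ℝ =>
      (ts n / ((α^2 * (3*α + 2*β + 2) * n / (2*(β+1) * B^2)) ^ (1/(2*(α+β+1)))) ^ (-α))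
        ^ (-(2*(β+1)/α)) *
      (α / B * (ts n ^ (1/α : ℝ) *
        ∑' i : ℕ, gg α β (ts n ^ (1/α : ℝ) * ((i:ℝ)+1)))) ^ 2) atTop (nhds 1) := by
    have h1 := hts.rpow_const (p := -(2*(β+1)/α)) (Or.inl one_ne_zero)
    have h2 := ((tendsto_const_nhds (x := α / B) (f := atTop)).mul hR).pow 2
    have h3 := h1.mul h2
    have h4 : (1:ℝ) ^ (-(2*(β+1)/α)) * (α / B * (B / α)) ^ 2 = 1 := by
      rw [Real.one_rpow]
      field_simp
    rwa [h4] at h3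
  apply hG.congr'
  filter_upwards [eventually_gt_atTop 0, hRpos] with n hn hRn
  rw [sum_eq hα (hpos n hn)]
  exact (alg α β B n
    (ts n / ((α^2 * (3*α + 2*β + 2) * n / (2*(β+1) * B^2)) ^ (1/(2*(α+β+1)))) ^ (-α))
    (ts n ^ (1/α : ℝ) * ∑' i : ℕ, gg α β (ts n ^ (1/α : ℝ) * ((i:ℝ)+1)))
    (ts n) hα hβ1 hB hn
    (div_pos (hpos n hn) (hYpos n hn)) hRn
    (div_mul_cancel₀ _ (hYpos n hn).ne').symm).symm
end
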